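/- arXiv:2605.18323 — 9 statements merged into one kernel-verified Lean document; each statement's English description precedes it below -/
import Mathlib

section
/- Let F be a field, let n ≥ 1, and for each i ∈ {1,…,n} let S_i ⊆ F be a finite nonempty set. If f ∈ F[x_1,…,x_n] is a nonzero polynomial such that the degree of f in the variable x_i is strictly less than |S_i| for every i, then there exists a point (s_1,…,s_n) ∈ S_1 × ⋯ × S_n with f(s_1,…,s_n) ≠ 0. -/
open MvPolynomial

private lemma grid_cn_aux {F : Type*} [Field F] : ∀ (n : ℕ)
    (S : Fin n → Finset F), (∀ i, (S i).Nonempty) →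
    ∀ (f : MvPolynomial (Fin n) F), f ≠ 0 →
    (∀ i, f.degreeOf i < (S i).card) →
    ∃ s : Fin n → F, (∀ i, s i ∈ S i) ∧ MvPolynomial.eval s f ≠ 0 := by
  intro n
  induction n with
  | zero =>
    intro S hS f hf _
    obtain ⟨c, rfl⟩ := MvPolynomial.C_surjective (Fin 0) f
    exact ⟨Fin.elim0, fun i => i.elim0, by simpa using fun h => hf (by rw [h, map_zero])⟩
  | succ n ih =>
    intro S hS f hf hdeg
    set q := finSuccEquiv F n f with hq
    have hq0 : q ≠ 0 := by
      simp only [hq, ne_eq, EmbeddingLike.map_eq_zero_iff]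
      exact hf
    set d := q.natDegree with hd
    have hg : q.coeff d ≠ 0 := by
      have := Polynomial.leadingCoeff_ne_zero.2 hq0
      rwa [Polynomial.leadingCoeff] at this
    have hdegg : ∀ j : Fin n, (q.coeff d).degreeOf j < ((S ∘ Fin.succ) j).card := fun j =>
      lt_of_le_of_lt (degreeOf_coeff_finSuccEquiv f j d) (hdeg j.succ)
    obtain ⟨s, hs, hes⟩ := ih (S ∘ Fin.succ) (fun j => hS j.succ) (q.coeff d) hg hdegg
    set p := q.map (MvPolynomial.eval s) with hp
    have hpc : p.coeff d ≠ 0 := by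
      rw [hp, Polynomial.coeff_map]; exact hes
    have hpd : p.natDegree < (S 0).card := by
      calc p.natDegree ≤ d := Polynomial.natDegree_map_le
        _ = f.degreeOf 0 := by rw [hd, natDegree_finSuccEquiv]
        _ < (S 0).card := hdeg 0
    obtain ⟨y, hy, hey⟩ : ∃ y ∈ S 0, p.eval y ≠ 0 := by
      by_contra h
      push_neg at h
      exact hpc (by
        rw [Polynomial.eq_zero_of_natDegree_lt_card_of_eval_eq_zero' p (S 0) h hpd,
          Polynomial.coeff_zero])
    refine ⟨Fin.cons y s, ?_, ?_⟩
    · intro i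
      refine Fin.cases ?_ ?_ i
      · simpa using hy
      · intro j; simpa using hs j
    · rw [eval_eq_eval_mv_eval']
      exact hey

/-- **Grid form of the Combinatorial Nullstellensatz.**
If `f` is a nonzero multivariate polynomial over a field `F` in `n` variables
whose degree in the variable `x i` is strictly less than `|S i|` for every `i`,
where each `S i` is a finite nonempty subset of `F`, then `f` does not vanish
on all of the grid `S 1 × ⋯ × S n`. -/
theorem grid_combinatorial_nullstellensatz
    {F : Type*} [Field F] (n : ℕ) (hn : 1 ≤ n)
    (S : Fin n → Finset F) (hS : ∀ i, (S i).Nonempty)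
    (f : MvPolynomial (Fin n) F) (hf : f ≠ 0)
    (hdeg : ∀ i, f.degreeOf i < (S i).card) :
    ∃ s : Fin n → F, (∀ i, s i ∈ S i) ∧ MvPolynomial.eval s f ≠ 0 :=
  grid_cn_aux n S hS f hf hdeg
end

section
/- Let F be a field, let E be a finite index set of variables, let k ≥ 1, and for each i ∈ {1,…,k} let N_i be a finite nonempty family of nonzero polynomials in the variables (x_e)_{e ∈ E} over F, each of degree at most 1 in every variable. Suppose T is a set of such polynomials with T ∩ N_i ≠ ∅ for every i (a cycle hitting set), and suppose each variable x_e occurs (with degree ≥ 1) in at most W members of T. If S ⊆ F is a finite set with |S| ≥ W + 1, then there exists an assignment x : E → S such that for every i ∈ {1,…,k} there is some l ∈ N_i with l(x) ≠ 0. -/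
open MvPolynomial

open Polynomial in
private lemma grid_fin (Fld : Type*) [Field Fld] (S : Finset Fld) :
    ∀ (n : ℕ) (P : MvPolynomial (Fin n) Fld), P ≠ 0 →
    (∀ e, P.degreeOf e < S.card) →
    ∃ x : Fin n → Fld, (∀ e, x e ∈ S) ∧ MvPolynomial.eval x P ≠ 0 := by
  intro n
  induction n with
  | zero =>
    intro P hP _
    refine ⟨0, fun e => e.elim0, ?_⟩
    contrapose! hP
    rw [MvPolynomial.eval_zero] at hP
    ext d
    rw [Subsingleton.elim d 0, MvPolynomial.coeff_zero, ← MvPolynomial.constantCoeff_eq]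
    exact hP
  | succ n IH =>
    intro P hP hdeg
    classical
    set q : Polynomial (MvPolynomial (Fin n) Fld) := MvPolynomial.finSuccEquiv Fld n P with hq
    have hq0 : q ≠ 0 := fun h => hP <| by
      simpa using (MvPolynomial.finSuccEquiv Fld n).injective (by simpa [hq] using h)
    have hlc : q.coeff q.natDegree ≠ 0 := by
      rw [← Polynomial.leadingCoeff]
      exact Polynomial.leadingCoeff_ne_zero.mpr hq0
    have hdegc : ∀ e : Fin n, (q.coeff q.natDegree).degreeOf e < S.card := by
      intro e
      exact lt_of_le_of_lt (MvPolynomial.degreeOf_coeff_finSuccEquiv P e q.natDegree)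
        (hdeg e.succ)
    obtain ⟨y, hyS, hy⟩ := IH (q.coeff q.natDegree) hlc hdegc
    set φ : Polynomial Fld := q.map (MvPolynomial.eval y) with hφ
    have hφ0 : φ ≠ 0 := fun h => hy <| by
      have := congrArg (fun r => Polynomial.coeff r q.natDegree) h
      simpa [hφ, Polynomial.coeff_map] using this
    have hφdeg : φ.natDegree < S.card := by
      refine lt_of_le_of_lt (Polynomial.natDegree_map_le) ?_
      rw [hq, MvPolynomial.natDegree_finSuccEquiv]
      exact hdeg 0
    -- find s ∈ S not a root of φ
    have hroots : φ.roots.toFinset.card < S.card :=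
      lt_of_le_of_lt (le_trans φ.roots.toFinset_card_le (Polynomial.card_roots' φ)) hφdeg
    obtain ⟨s, hsS, hs⟩ : ∃ s ∈ S, s ∉ φ.roots.toFinset := by
      by_contra h
      push_neg at h
      exact absurd (Finset.card_le_card h) (not_le.mpr hroots)
    have hsroot : Polynomial.eval s φ ≠ 0 := by
      intro h
      exact hs (Multiset.mem_toFinset.mpr ((Polynomial.mem_roots hφ0).mpr h))
    refine ⟨Fin.cons s y, ?_, ?_⟩
    · intro e
      refine Fin.cases ?_ ?_ e
      · simpa using hsS
      · intro j; simpa using hyS j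
    · rwa [MvPolynomial.eval_eq_eval_mv_eval']

private lemma grid_general {Fld : Type*} [Field Fld] {E : Type*} [Fintype E]
    (S : Finset Fld) (P : MvPolynomial E Fld) (hP : P ≠ 0)
    (hdeg : ∀ e, P.degreeOf e < S.card) :
    ∃ x : E → Fld, (∀ e, x e ∈ S) ∧ MvPolynomial.eval x P ≠ 0 := by
  obtain ⟨n, ⟨eqv⟩⟩ := Finite.exists_equiv_fin E
  set Q := MvPolynomial.rename eqv P with hQ
  have hQ0 : Q ≠ 0 := fun h => hP ((MvPolynomial.rename_injective _ eqv.injective)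
    (by simpa [hQ] using h))
  have hQdeg : ∀ j : Fin n, Q.degreeOf j < S.card := by
    intro j
    have := MvPolynomial.degreeOf_rename_of_injective (p := P) eqv.injective (eqv.symm j)
    rw [Equiv.apply_symm_apply] at this
    rw [hQ, this]
    exact hdeg _
  obtain ⟨x', hx'S, hx'⟩ := grid_fin Fld S n Q hQ0 hQdeg
  refine ⟨x' ∘ eqv, fun e => hx'S _, ?_⟩
  rwa [hQ, MvPolynomial.eval_rename] at hx'

/-- Theorem 1 (cycle-hitting-set/load-bound sufficient condition), polynomial
form.  For each harmful structure `i` let `N i` be a finite nonempty family of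
nonzero polynomials of degree ≤ 1 in every variable (its fundamental-cycle
polynomials).  If `T` is a cycle hitting set (a set of such polynomials meeting
every `N i`) and every variable occurs in at most `W` members of `T`, then for
any finite `S ⊆ F` with `|S| ≥ W + 1` there is an assignment `x : E → S`
making, for every `i`, some member of `N i` nonvanishing. -/
theorem cycle_hitting_set_load_bound
    {F : Type*} [Field F] {E : Type*} [Fintype E]
    (k : ℕ) (hk : 1 ≤ k)
    (N : Fin k → Finset (MvPolynomial E F))
    (hNne : ∀ i, (N i).Nonempty)
    (hN0 : ∀ i, ∀ l ∈ N i, l ≠ 0)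
    (hNdeg : ∀ i, ∀ l ∈ N i, ∀ e : E, l.degreeOf e ≤ 1)
    (T : Finset (MvPolynomial E F))
    (hT0 : ∀ l ∈ T, l ≠ 0)
    (hTdeg : ∀ l ∈ T, ∀ e : E, l.degreeOf e ≤ 1)
    (hhit : ∀ i, ∃ l, l ∈ T ∧ l ∈ N i)
    (W : ℕ)
    (hW : ∀ e : E, (T.filter (fun l => 1 ≤ l.degreeOf e)).card ≤ W)
    (S : Finset F) (hS : W + 1 ≤ S.card) :
    ∃ x : E → F, (∀ e, x e ∈ S) ∧
      ∀ i, ∃ l ∈ N i, MvPolynomial.eval x l ≠ 0 := by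
  set P : MvPolynomial E F := ∏ l ∈ T, l with hP
  have hP0 : P ≠ 0 := Finset.prod_ne_zero_iff.mpr hT0
  have hPdeg : ∀ e, P.degreeOf e < S.card := by
    intro e
    refine lt_of_le_of_lt (MvPolynomial.degreeOf_prod_le e T id) ?_
    have hsum : ∑ l ∈ T, (l : MvPolynomial E F).degreeOf e
        = ∑ l ∈ T.filter (fun l => 1 ≤ l.degreeOf e), l.degreeOf e := by
      rw [Finset.sum_filter_of_ne]
      intro l _ h
      omega
    calc ∑ l ∈ T, (id l : MvPolynomial E F).degreeOf e
        = ∑ l ∈ T.filter (fun l => 1 ≤ l.degreeOf e), l.degreeOf e := hsum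
      _ ≤ ∑ _l ∈ T.filter (fun l => 1 ≤ l.degreeOf e), 1 := by
          refine Finset.sum_le_sum ?_
          intro l hl
          exact hTdeg l (Finset.mem_filter.mp hl).1 e
      _ = (T.filter (fun l => 1 ≤ l.degreeOf e)).card := by simp
      _ ≤ W := hW e
      _ < S.card := by omega
  obtain ⟨x, hxS, hx⟩ := grid_general S P hP0 hPdeg
  refine ⟨x, hxS, ?_⟩
  intro i
  obtain ⟨l, hlT, hlN⟩ := hhit i
  refine ⟨l, hlN, ?_⟩
  intro h
  apply hx
  rw [hP, map_prod]
  exact Finset.prod_eq_zero hlT h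
end

section
/- Let γ ≥ 2 and κ ≥ 2 be integers and let S ⊆ ℤ be a finite set with |S| ≥ (γ−1)(κ−1) + 1. Then there exists a function P : {0,…,γ−1} × {0,…,κ−1} → S such that for all i1 ≠ i2 in {0,…,γ−1} and all j1 ≠ j2 in {0,…,κ−1}, P(i1,j1) + P(i2,j2) ≠ P(i1,j2) + P(i2,j1). -/
/-- One greedy step: given the list of previously chosen values (in row-major
order, row length `κ`), choose a fresh value from `S` avoiding all values
that would create an active 4-cycle candidate with earlier entries. -/
def corStep (S : Finset ℤ) (κ : ℕ) (l : List ℤ) : ℤ :=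
  let n := l.length
  let i := n / κ
  let j := n % κ
  let T : Finset ℤ := ((Finset.range i) ×ˢ (Finset.range j)).image
    (fun p => l.getD (p.1 * κ + j) 0 - l.getD (p.1 * κ + p.2) 0 + l.getD (i * κ + p.2) 0)
  if h : (S \ T).Nonempty then (S \ T).min' h else 0

/-- The list of the first `n` greedily chosen values. -/
def corSeq (S : Finset ℤ) (κ : ℕ) : ℕ → List ℤ
  | 0 => []
  | n + 1 => corSeq S κ n ++ [corStep S κ (corSeq S κ n)]

/-- The `n`-th greedily chosen value. -/
def corF (S : Finset ℤ) (κ : ℕ) (n : ℕ) : ℤ := corStep S κ (corSeq S κ n)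

lemma corSeq_length (S : Finset ℤ) (κ n : ℕ) : (corSeq S κ n).length = n := by
  induction n with
  | zero => rfl
  | succ n ih => simp [corSeq, ih]

lemma corSeq_getD (S : Finset ℤ) (κ : ℕ) {k n : ℕ} (h : k < n) :
    (corSeq S κ n).getD k 0 = corF S κ k := by
  induction n with
  | zero => omega
  | succ n ih =>
    have hl : (corSeq S κ n).length = n := corSeq_length S κ n
    rcases lt_or_eq_of_le (Nat.lt_succ_iff.mp h) with h' | h'
    · rw [corSeq, List.getD_append _ _ _ _ (by rw [hl]; exact h')]
      exact ih h'
    · subst h'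
      rw [corSeq, List.getD_append_right _ _ _ _ hl.le]
      simp [hl, corF]

lemma cor_div {κ j : ℕ} (hκ0 : 0 < κ) (hj : j < κ) (i : ℕ) : (i * κ + j) / κ = i := by
  rw [add_comm, Nat.add_mul_div_right _ _ hκ0, Nat.div_eq_of_lt hj, Nat.zero_add]

lemma cor_mod {κ j : ℕ} (hj : j < κ) (i : ℕ) : (i * κ + j) % κ = j := by
  rw [add_comm, Nat.add_mul_mod_self_right, Nat.mod_eq_of_lt hj]

lemma corF_spec (S : Finset ℤ) (κ : ℕ) (n : ℕ) (hcard : n / κ * (n % κ) < S.card)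
    (hκ : 0 < κ) :
    corF S κ n ∈ S ∧ ∀ i' < n / κ, ∀ j' < n % κ,
      corF S κ n ≠ corF S κ (i' * κ + n % κ) - corF S κ (i' * κ + j')
        + corF S κ (n / κ * κ + j') := by
  have hl : (corSeq S κ n).length = n := corSeq_length S κ n
  set i := n / κ with hi
  set j := n % κ with hj
  have hn : i * κ + j = n := by rw [hi, hj, mul_comm]; exact Nat.div_add_mod n κ
  set l := corSeq S κ n with hldef
  set T : Finset ℤ := ((Finset.range i) ×ˢ (Finset.range j)).image
    (fun p => l.getD (p.1 * κ + j) 0 - l.getD (p.1 * κ + p.2) 0 + l.getD (i * κ + p.2) 0)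
    with hT
  have hTcard : T.card ≤ i * j := by
    calc T.card ≤ ((Finset.range i) ×ˢ (Finset.range j)).card := Finset.card_image_le
    _ = i * j := by simp
  have hne : (S \ T).Nonempty := by
    rw [Finset.sdiff_nonempty]
    intro hsub
    exact Nat.lt_irrefl _
      (lt_of_le_of_lt (le_trans (Finset.card_le_card hsub) hTcard) hcard)
  have heq : corF S κ n = (S \ T).min' hne := by
    rw [corF, corStep]
    simp only [hl, ← hi, ← hj, ← hldef, ← hT]
    rw [dif_pos hne]
  have hmem := (S \ T).min'_mem hne
  rw [← heq] at hmem
  rw [Finset.mem_sdiff] at hmem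
  refine ⟨hmem.1, fun i' hi' j' hj' h => ?_⟩
  apply hmem.2
  rw [hT, Finset.mem_image]
  refine ⟨(i', j'), by simp [Finset.mem_product, hi', hj'], ?_⟩
  have hmul : i' * κ < i * κ := (Nat.mul_lt_mul_right hκ).mpr hi'
  have h1 : i' * κ + j < n := by omega
  have h2 : i' * κ + j' < n := by omega
  have h3 : i * κ + j' < n := by omega
  rw [corSeq_getD S κ h1, corSeq_getD S κ h2, corSeq_getD S κ h3]
  exact h.symm

/-- Auxiliary: the ordered case of the main theorem. -/
lemma corF_ordered (S : Finset ℤ) (γ κ : ℕ) (hγ : 2 ≤ γ) (hκ : 2 ≤ κ)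
    (hS : (γ - 1) * (κ - 1) + 1 ≤ S.card)
    {i1 i2 j1 j2 : ℕ} (hi1 : i1 < γ) (hj1 : j1 < κ) (hii : i2 < i1) (hjj : j2 < j1) :
    corF S κ (i1 * κ + j1) + corF S κ (i2 * κ + j2) ≠
      corF S κ (i1 * κ + j2) + corF S κ (i2 * κ + j1) := by
  have hκ0 : 0 < κ := by omega
  set n := i1 * κ + j1 with hn
  have hdiv : n / κ = i1 := cor_div hκ0 hj1 i1
  have hmod : n % κ = j1 := cor_mod hj1 i1
  have hcard : n / κ * (n % κ) < S.card := by
    rw [hdiv, hmod]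
    have h1 : i1 ≤ γ - 1 := by omega
    have h2 : j1 ≤ κ - 1 := by omega
    have := Nat.mul_le_mul h1 h2
    omega
  have hspec := corF_spec S κ n hcard hκ0
  have := hspec.2 i2 (by omega) j2 (by omega)
  rw [hmod, hdiv] at this
  intro habs
  exact this (by linarith)

/-- Corollary 2: for a fully connected `γ × κ` base graph, any value set
`S ⊆ ℤ` with `|S| ≥ (γ-1)(κ-1) + 1` admits a partition matrix
`P : {0,…,γ-1} × {0,…,κ-1} → S` destroying all 4-cycle candidates, i.e.
`P i1 j1 + P i2 j2 ≠ P i1 j2 + P i2 j1` whenever `i1 ≠ i2` and `j1 ≠ j2`;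
hence the coupled protograph has girth at least 6. -/
theorem exists_partition_matrix_no_four_cycles
    (γ κ : ℕ) (hγ : 2 ≤ γ) (hκ : 2 ≤ κ)
    (S : Finset ℤ) (hS : (γ - 1) * (κ - 1) + 1 ≤ S.card) :
    ∃ P : Fin γ → Fin κ → ℤ, (∀ i j, P i j ∈ S) ∧
      ∀ i1 i2 : Fin γ, ∀ j1 j2 : Fin κ, i1 ≠ i2 → j1 ≠ j2 →
        P i1 j1 + P i2 j2 ≠ P i1 j2 + P i2 j1 := by
  have hκ0 : 0 < κ := by omega
  refine ⟨fun i j => corF S κ (i.1 * κ + j.1), fun i j => ?_, ?_⟩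
  · -- membership
    have hdiv : (i.1 * κ + j.1) / κ = i.1 := cor_div hκ0 j.2 i.1
    have hmod : (i.1 * κ + j.1) % κ = j.1 := cor_mod j.2 i.1
    have hcard : (i.1 * κ + j.1) / κ * ((i.1 * κ + j.1) % κ) < S.card := by
      rw [hdiv, hmod]
      have h1 : i.1 ≤ γ - 1 := by have := i.2; omega
      have h2 : j.1 ≤ κ - 1 := by have := j.2; omega
      have := Nat.mul_le_mul h1 h2
      omega
    exact (corF_spec S κ _ hcard hκ0).1
  · intro i1 i2 j1 j2 hii hjj
    have hii' : i1.1 ≠ i2.1 := fun h => hii (Fin.ext h)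
    have hjj' : j1.1 ≠ j2.1 := fun h => hjj (Fin.ext h)
    rcases lt_or_gt_of_ne hii' with hI | hI <;> rcases lt_or_gt_of_ne hjj' with hJ | hJ
    · have := corF_ordered S γ κ hγ hκ hS i2.2 j2.2 hI hJ
      intro h; exact this (by linarith)
    · have := corF_ordered S γ κ hγ hκ hS i2.2 j1.2 hI hJ
      intro h; exact this (by linarith)
    · have := corF_ordered S γ κ hγ hκ hS i1.2 j2.2 hI hJ
      intro h; exact this (by linarith)
    · have := corF_ordered S γ κ hγ hκ hS i1.2 j1.2 hI hJ
      intro h; exact this (by linarith)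
end

section
/- Let γ ≥ 2 and κ ≥ 2 be integers and let S ⊆ ℤ be a finite set with |S| ≥ (γ−1)(γ−2)(κ−1)(κ−2) + (γ−1)(κ−1) + 1. Then there exists a function P : {0,…,γ−1} × {0,…,κ−1} → S such that (i) for all i1 ≠ i2 and j1 ≠ j2, P(i1,j1) + P(i2,j2) ≠ P(i1,j2) + P(i2,j1), and (ii) for all pairwise distinct i1, i2, i3 in {0,…,γ−1} and pairwise distinct j1, j2, j3 in {0,…,κ−1}, P(i1,j1) + P(i2,j2) + P(i3,j3) ≠ P(i1,j2) + P(i2,j3) + P(i3,j1). -/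
open Finset

noncomputable section PartitionMatrixAux

/-- flat position of entry `(i,j)` in a matrix with `κ` columns -/
def pmPos (κ i j : ℕ) : ℕ := i * κ + j

lemma pmPos_lt_right (κ i b j : ℕ) (h : b < j) : pmPos κ i b < pmPos κ i j := by
  simp only [pmPos]; omega

lemma pmPos_lt_left (κ a b i j : ℕ) (ha : a < i) (hb : b < κ) :
    pmPos κ a b < pmPos κ i j := by
  have h1 : a * κ + b < (a + 1) * κ := by rw [add_mul, one_mul]; omega
  have h2 : (a + 1) * κ ≤ i * κ := Nat.mul_le_mul (by omega) le_rfl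
  exact lt_of_lt_of_le (lt_of_lt_of_le h1 h2) (Nat.le_add_right _ _)

/-- forbidden values for entry `(i,j)` given earlier entries `p` -/
def pmForb (κ i j : ℕ) (p : ℕ → ℤ) : Finset ℤ :=
  ((Finset.range i ×ˢ Finset.range j).image
    (fun ab => p (pmPos κ i ab.2) + p (pmPos κ ab.1 j) - p (pmPos κ ab.1 ab.2)))
  ∪ (((Finset.range i).offDiag ×ˢ Finset.range j).biUnion
      (fun x => ((Finset.range κ) \ {j, x.2}).image
        (fun d => p (pmPos κ i x.2) + p (pmPos κ x.1.1 d) + p (pmPos κ x.1.2 j)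
                  - p (pmPos κ x.1.1 x.2) - p (pmPos κ x.1.2 d))))

lemma pmForb_card_le (κ i j : ℕ) (hj : j < κ) (p : ℕ → ℤ) :
    (pmForb κ i j p).card ≤ i * j + (i * i - i) * j * (κ - 2) := by
  classical
  unfold pmForb
  refine le_trans (Finset.card_union_le _ _) (Nat.add_le_add ?_ ?_)
  · exact le_trans Finset.card_image_le (by simp)
  · refine le_trans Finset.card_biUnion_le ?_
    refine le_trans (Finset.sum_le_card_nsmul _ _ (κ - 2) ?_) ?_
    · intro x hx
      refine le_trans Finset.card_image_le ?_
      have hx2 : x.2 < j := by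
        have := (Finset.mem_product.mp hx).2
        simpa using this
      have hsub : ({j, x.2} : Finset ℕ) ⊆ Finset.range κ := by
        intro y hy
        simp only [Finset.mem_insert, Finset.mem_singleton] at hy
        rcases hy with rfl | rfl <;> simp [Finset.mem_range] <;> omega
      rw [Finset.card_sdiff_of_subset hsub]
      have hc2 : ({j, x.2} : Finset ℕ).card = 2 := by
        rw [Finset.card_insert_of_notMem (by simp; omega), Finset.card_singleton]
      rw [hc2, Finset.card_range]
    · rw [smul_eq_mul, Finset.card_product, Finset.offDiag_card, Finset.card_range,
        Finset.card_range]

lemma pmBound_le (γ κ i j : ℕ) (h2γ : 2 ≤ γ) (h2κ : 2 ≤ κ) (hi : i < γ) (hj : j < κ) :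
    i * j + (i * i - i) * j * (κ - 2)
      ≤ (γ - 1) * (γ - 2) * (κ - 1) * (κ - 2) + (γ - 1) * (κ - 1) := by
  have h1 : i * j ≤ (γ - 1) * (κ - 1) := Nat.mul_le_mul (by omega) (by omega)
  have hii : i * i - i = i * (i - 1) := by
    cases i with
    | zero => simp
    | succ n => rw [Nat.succ_sub_one, Nat.mul_succ, Nat.add_sub_cancel]
  have h2 : i * i - i ≤ (γ - 1) * (γ - 2) := by
    rw [hii]; exact Nat.mul_le_mul (by omega) (by omega)
  have h3 : (i * i - i) * j * (κ - 2) ≤ (γ - 1) * (γ - 2) * (κ - 1) * (κ - 2) :=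
    Nat.mul_le_mul (Nat.mul_le_mul h2 (by omega)) le_rfl
  calc i * j + (i * i - i) * j * (κ - 2)
      ≤ (γ - 1) * (κ - 1) + (γ - 1) * (γ - 2) * (κ - 1) * (κ - 2) :=
        Nat.add_le_add h1 h3
    _ = _ := Nat.add_comm _ _

/-- greedy sequence of partial assignments -/
def pmSeq (κ : ℕ) (S : Finset ℤ) : ℕ → ℕ → ℤ
  | 0 => fun _ => 0
  | (n + 1) => Function.update (pmSeq κ S n) n
      (if h : (S \ pmForb κ (n / κ) (n % κ) (pmSeq κ S n)).Nonempty then h.choose else 0)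

def pmVal (κ : ℕ) (S : Finset ℤ) (k : ℕ) : ℤ := pmSeq κ S (k + 1) k

lemma pmSeq_eq_pmVal (κ : ℕ) (S : Finset ℤ) :
    ∀ n k, k < n → pmSeq κ S n k = pmVal κ S k := by
  intro n
  induction n with
  | zero => intro k h; omega
  | succ n ih =>
    intro k h
    rcases Nat.lt_or_ge k n with h' | h'
    · rw [pmSeq, Function.update_of_ne (by omega), ih k h']
    · have hk : k = n := by omega
      subst hk
      rfl

lemma pmVal_spec (γ κ : ℕ) (h2γ : 2 ≤ γ) (h2κ : 2 ≤ κ) (S : Finset ℤ)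
    (hS : (γ - 1) * (γ - 2) * (κ - 1) * (κ - 2) + (γ - 1) * (κ - 1) + 1 ≤ S.card)
    (i j : ℕ) (hi : i < γ) (hj : j < κ) :
    pmVal κ S (pmPos κ i j) ∈ S \ pmForb κ i j (pmSeq κ S (pmPos κ i j)) := by
  have hκ : 0 < κ := by omega
  have hdiv : pmPos κ i j / κ = i := by
    show (i * κ + j) / κ = i
    rw [Nat.mul_comm, Nat.mul_add_div hκ, Nat.div_eq_of_lt hj, Nat.add_zero]
  have hmod : pmPos κ i j % κ = j := by
    show (i * κ + j) % κ = j
    rw [Nat.mul_comm, Nat.mul_add_mod, Nat.mod_eq_of_lt hj]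
  have hne : (S \ pmForb κ (pmPos κ i j / κ) (pmPos κ i j % κ)
      (pmSeq κ S (pmPos κ i j))).Nonempty := by
    rw [hdiv, hmod, Finset.sdiff_nonempty]
    intro hsub
    have h1 := Finset.card_le_card hsub
    have h2 := pmForb_card_le κ i j hj (pmSeq κ S (pmPos κ i j))
    have h3 := pmBound_le γ κ i j h2γ h2κ hi hj
    omega
  have hf : pmVal κ S (pmPos κ i j) = hne.choose := by
    show pmSeq κ S (pmPos κ i j + 1) (pmPos κ i j) = _
    rw [pmSeq, Function.update_self, dif_pos hne]
  have hspec := hne.choose_spec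
  have hset : S \ pmForb κ (pmPos κ i j / κ) (pmPos κ i j % κ) (pmSeq κ S (pmPos κ i j))
      = S \ pmForb κ i j (pmSeq κ S (pmPos κ i j)) := by rw [hdiv, hmod]
  rw [hf]
  exact hset ▸ hspec

lemma pm_no4 (γ κ : ℕ) (h2γ : 2 ≤ γ) (h2κ : 2 ≤ κ) (S : Finset ℤ)
    (hS : (γ - 1) * (γ - 2) * (κ - 1) * (κ - 2) + (γ - 1) * (κ - 1) + 1 ≤ S.card)
    (i1 i2 j1 j2 : ℕ) (hi1 : i1 < γ) (hj1 : j1 < κ) (h21 : i2 < i1) (hj21 : j2 < j1) :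
    pmVal κ S (pmPos κ i1 j1) + pmVal κ S (pmPos κ i2 j2)
      ≠ pmVal κ S (pmPos κ i1 j2) + pmVal κ S (pmPos κ i2 j1) := by
  intro heq
  have hs := pmVal_spec γ κ h2γ h2κ S hS i1 j1 hi1 hj1
  have hnot := (Finset.mem_sdiff.mp hs).2
  apply hnot
  apply Finset.mem_union_left
  apply Finset.mem_image.mpr
  refine ⟨(i2, j2), ?_, ?_⟩
  · simp only [Finset.mem_product, Finset.mem_range]
    exact ⟨h21, hj21⟩
  · have e1 : pmSeq κ S (pmPos κ i1 j1) (pmPos κ i1 j2) = pmVal κ S (pmPos κ i1 j2) :=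
      pmSeq_eq_pmVal κ S _ _ (pmPos_lt_right κ i1 j2 j1 hj21)
    have e2 : pmSeq κ S (pmPos κ i1 j1) (pmPos κ i2 j1) = pmVal κ S (pmPos κ i2 j1) :=
      pmSeq_eq_pmVal κ S _ _ (pmPos_lt_left κ i2 j1 i1 j1 h21 hj1)
    have e3 : pmSeq κ S (pmPos κ i1 j1) (pmPos κ i2 j2) = pmVal κ S (pmPos κ i2 j2) :=
      pmSeq_eq_pmVal κ S _ _ (pmPos_lt_left κ i2 j2 i1 j1 h21 (by omega))
    show pmSeq κ S (pmPos κ i1 j1) (pmPos κ i1 j2)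
        + pmSeq κ S (pmPos κ i1 j1) (pmPos κ i2 j1)
        - pmSeq κ S (pmPos κ i1 j1) (pmPos κ i2 j2) = pmVal κ S (pmPos κ i1 j1)
    rw [e1, e2, e3]
    linarith

lemma pm_no6 (γ κ : ℕ) (h2γ : 2 ≤ γ) (h2κ : 2 ≤ κ) (S : Finset ℤ)
    (hS : (γ - 1) * (γ - 2) * (κ - 1) * (κ - 2) + (γ - 1) * (κ - 1) + 1 ≤ S.card)
    (i1 i2 i3 j1 j2 j3 : ℕ) (hi1 : i1 < γ)
    (hj1 : j1 < κ) (hj2 : j2 < κ) (hj3 : j3 < κ)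
    (h21 : i2 < i1) (h31 : i3 < i1) (h23 : i2 ≠ i3)
    (hj12 : j1 ≠ j2) (hj13 : j1 ≠ j3) (hj23 : j2 ≠ j3) :
    pmVal κ S (pmPos κ i1 j1) + pmVal κ S (pmPos κ i2 j2) + pmVal κ S (pmPos κ i3 j3)
      ≠ pmVal κ S (pmPos κ i1 j2) + pmVal κ S (pmPos κ i2 j3)
        + pmVal κ S (pmPos κ i3 j1) := by
  intro heq
  rcases lt_or_gt_of_ne hj12 with hlt | hlt
  · -- j1 < j2 : largest entry is (i1, j2)
    have hs := pmVal_spec γ κ h2γ h2κ S hS i1 j2 hi1 hj2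
    have hnot := (Finset.mem_sdiff.mp hs).2
    apply hnot
    apply Finset.mem_union_right
    apply Finset.mem_biUnion.mpr
    refine ⟨((i3, i2), j1), ?_, ?_⟩
    · simp only [Finset.mem_product, Finset.mem_offDiag, Finset.mem_range]
      exact ⟨⟨h31, h21, fun h => h23 h.symm⟩, hlt⟩
    · apply Finset.mem_image.mpr
      refine ⟨j3, ?_, ?_⟩
      · simp only [Finset.mem_sdiff, Finset.mem_range, Finset.mem_insert,
          Finset.mem_singleton]
        exact ⟨hj3, by omega⟩
      · have e1 : pmSeq κ S (pmPos κ i1 j2) (pmPos κ i1 j1) = pmVal κ S (pmPos κ i1 j1) :=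
          pmSeq_eq_pmVal κ S _ _ (pmPos_lt_right κ i1 j1 j2 hlt)
        have e2 : pmSeq κ S (pmPos κ i1 j2) (pmPos κ i3 j3) = pmVal κ S (pmPos κ i3 j3) :=
          pmSeq_eq_pmVal κ S _ _ (pmPos_lt_left κ i3 j3 i1 j2 h31 hj3)
        have e3 : pmSeq κ S (pmPos κ i1 j2) (pmPos κ i2 j2) = pmVal κ S (pmPos κ i2 j2) :=
          pmSeq_eq_pmVal κ S _ _ (pmPos_lt_left κ i2 j2 i1 j2 h21 hj2)
        have e4 : pmSeq κ S (pmPos κ i1 j2) (pmPos κ i3 j1) = pmVal κ S (pmPos κ i3 j1) :=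
          pmSeq_eq_pmVal κ S _ _ (pmPos_lt_left κ i3 j1 i1 j2 h31 hj1)
        have e5 : pmSeq κ S (pmPos κ i1 j2) (pmPos κ i2 j3) = pmVal κ S (pmPos κ i2 j3) :=
          pmSeq_eq_pmVal κ S _ _ (pmPos_lt_left κ i2 j3 i1 j2 h21 hj3)
        show pmSeq κ S (pmPos κ i1 j2) (pmPos κ i1 j1)
            + pmSeq κ S (pmPos κ i1 j2) (pmPos κ i3 j3)
            + pmSeq κ S (pmPos κ i1 j2) (pmPos κ i2 j2)
            - pmSeq κ S (pmPos κ i1 j2) (pmPos κ i3 j1)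
            - pmSeq κ S (pmPos κ i1 j2) (pmPos κ i2 j3) = pmVal κ S (pmPos κ i1 j2)
        rw [e1, e2, e3, e4, e5]
        linarith
  · -- j2 < j1 : largest entry is (i1, j1)
    have hs := pmVal_spec γ κ h2γ h2κ S hS i1 j1 hi1 hj1
    have hnot := (Finset.mem_sdiff.mp hs).2
    apply hnot
    apply Finset.mem_union_right
    apply Finset.mem_biUnion.mpr
    refine ⟨((i2, i3), j2), ?_, ?_⟩
    · simp only [Finset.mem_product, Finset.mem_offDiag, Finset.mem_range]
      exact ⟨⟨h21, h31, h23⟩, hlt⟩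
    · apply Finset.mem_image.mpr
      refine ⟨j3, ?_, ?_⟩
      · simp only [Finset.mem_sdiff, Finset.mem_range, Finset.mem_insert,
          Finset.mem_singleton]
        exact ⟨hj3, by omega⟩
      · have e1 : pmSeq κ S (pmPos κ i1 j1) (pmPos κ i1 j2) = pmVal κ S (pmPos κ i1 j2) :=
          pmSeq_eq_pmVal κ S _ _ (pmPos_lt_right κ i1 j2 j1 hlt)
        have e2 : pmSeq κ S (pmPos κ i1 j1) (pmPos κ i2 j3) = pmVal κ S (pmPos κ i2 j3) :=
          pmSeq_eq_pmVal κ S _ _ (pmPos_lt_left κ i2 j3 i1 j1 h21 hj3)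
        have e3 : pmSeq κ S (pmPos κ i1 j1) (pmPos κ i3 j1) = pmVal κ S (pmPos κ i3 j1) :=
          pmSeq_eq_pmVal κ S _ _ (pmPos_lt_left κ i3 j1 i1 j1 h31 hj1)
        have e4 : pmSeq κ S (pmPos κ i1 j1) (pmPos κ i2 j2) = pmVal κ S (pmPos κ i2 j2) :=
          pmSeq_eq_pmVal κ S _ _ (pmPos_lt_left κ i2 j2 i1 j1 h21 hj2)
        have e5 : pmSeq κ S (pmPos κ i1 j1) (pmPos κ i3 j3) = pmVal κ S (pmPos κ i3 j3) :=
          pmSeq_eq_pmVal κ S _ _ (pmPos_lt_left κ i3 j3 i1 j1 h31 hj3)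
        show pmSeq κ S (pmPos κ i1 j1) (pmPos κ i1 j2)
            + pmSeq κ S (pmPos κ i1 j1) (pmPos κ i2 j3)
            + pmSeq κ S (pmPos κ i1 j1) (pmPos κ i3 j1)
            - pmSeq κ S (pmPos κ i1 j1) (pmPos κ i2 j2)
            - pmSeq κ S (pmPos κ i1 j1) (pmPos κ i3 j3) = pmVal κ S (pmPos κ i1 j1)
        rw [e1, e2, e3, e4, e5]
        linarith

end PartitionMatrixAux

/-- Corollary 3: for a fully connected `γ × κ` base graph, any value set
`S ⊆ ℤ` with `|S| ≥ (γ-1)(γ-2)(κ-1)(κ-2) + (γ-1)(κ-1) + 1` admits a partition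
matrix `P` destroying simultaneously all 4-cycle candidates and all 6-cycle
candidates; hence the coupled protograph has girth at least 8. -/
theorem exists_partition_matrix_no_four_or_six_cycles
    (γ κ : ℕ) (hγ : 2 ≤ γ) (hκ : 2 ≤ κ)
    (S : Finset ℤ)
    (hS : (γ - 1) * (γ - 2) * (κ - 1) * (κ - 2) + (γ - 1) * (κ - 1) + 1
        ≤ S.card) :
    ∃ P : Fin γ → Fin κ → ℤ, (∀ i j, P i j ∈ S) ∧
      (∀ i1 i2 : Fin γ, ∀ j1 j2 : Fin κ, i1 ≠ i2 → j1 ≠ j2 →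
        P i1 j1 + P i2 j2 ≠ P i1 j2 + P i2 j1) ∧
      (∀ i1 i2 i3 : Fin γ, ∀ j1 j2 j3 : Fin κ,
        i1 ≠ i2 → i1 ≠ i3 → i2 ≠ i3 → j1 ≠ j2 → j1 ≠ j3 → j2 ≠ j3 →
        P i1 j1 + P i2 j2 + P i3 j3 ≠ P i1 j2 + P i2 j3 + P i3 j1) := by
  classical
  refine ⟨fun i j => pmVal κ S (pmPos κ (i : ℕ) (j : ℕ)), ?_, ?_, ?_⟩
  · intro i j
    exact (Finset.mem_sdiff.mp
      (pmVal_spec γ κ hγ hκ S hS i j i.isLt j.isLt)).1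
  · intro i1 i2 j1 j2 hi hj heq
    have hi' : (i1 : ℕ) ≠ (i2 : ℕ) := fun h => hi (Fin.val_injective h)
    have hj' : (j1 : ℕ) ≠ (j2 : ℕ) := fun h => hj (Fin.val_injective h)
    rcases lt_or_gt_of_ne hi' with h1 | h1 <;> rcases lt_or_gt_of_ne hj' with h2 | h2
    · exact pm_no4 γ κ hγ hκ S hS i2 i1 j2 j1 i2.isLt j2.isLt h1 h2 (by linarith)
    · exact pm_no4 γ κ hγ hκ S hS i2 i1 j1 j2 i2.isLt j1.isLt h1 h2 (by linarith)
    · exact pm_no4 γ κ hγ hκ S hS i1 i2 j2 j1 i1.isLt j2.isLt h1 h2 (by linarith)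
    · exact pm_no4 γ κ hγ hκ S hS i1 i2 j1 j2 i1.isLt j1.isLt h1 h2 (by linarith)
  · intro i1 i2 i3 j1 j2 j3 h12 h13 h23 g12 g13 g23 heq
    have h12' : (i1 : ℕ) ≠ (i2 : ℕ) := fun h => h12 (Fin.val_injective h)
    have h13' : (i1 : ℕ) ≠ (i3 : ℕ) := fun h => h13 (Fin.val_injective h)
    have h23' : (i2 : ℕ) ≠ (i3 : ℕ) := fun h => h23 (Fin.val_injective h)
    have g12' : (j1 : ℕ) ≠ (j2 : ℕ) := fun h => g12 (Fin.val_injective h)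
    have g13' : (j1 : ℕ) ≠ (j3 : ℕ) := fun h => g13 (Fin.val_injective h)
    have g23' : (j2 : ℕ) ≠ (j3 : ℕ) := fun h => g23 (Fin.val_injective h)
    rcases (by omega : ((i2 : ℕ) < i1 ∧ (i3 : ℕ) < i1)
        ∨ ((i1 : ℕ) < i2 ∧ (i3 : ℕ) < i2) ∨ ((i1 : ℕ) < i3 ∧ (i2 : ℕ) < i3))
      with ⟨ha, hb⟩ | ⟨ha, hb⟩ | ⟨ha, hb⟩
    · exact pm_no6 γ κ hγ hκ S hS i1 i2 i3 j1 j2 j3 i1.isLt j1.isLt j2.isLt j3.isLt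
        ha hb h23' g12' g13' g23' (by linarith)
    · exact pm_no6 γ κ hγ hκ S hS i2 i3 i1 j2 j3 j1 i2.isLt j2.isLt j3.isLt j1.isLt
        hb ha (fun h => h13' h.symm) g23' (fun h => g12' h.symm) g13'.symm (by linarith)
    · exact pm_no6 γ κ hγ hκ S hS i3 i1 i2 j3 j1 j2 i3.isLt j3.isLt j1.isLt j2.isLt
        ha hb h12' (fun h => g13' h.symm) (fun h => g23' h.symm) g12' (by linarith)
end

section
/- Let n ≥ 1, s ≥ 2, and D be integers with 0 ≤ D ≤ n(s−1), and write D = q(s−1) + r with q ≥ 0 an integer and 0 ≤ r < s−1. Then the minimum of the product y_1 · y_2 ⋯ y_n over all integer tuples (y_1,…,y_n) with 1 ≤ y_i ≤ s for all i and y_1 + ⋯ + y_n = ns − D equals s^{n−q} if r = 0, and equals (s−r)·s^{n−q−1} if r > 0; in particular this set of tuples is nonempty and the minimum is attained. -/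
/-- Greedy recursive evaluation of the Alon–Füredi minimum. -/
def AFF (s : ℕ) : ℕ → ℕ → ℕ
  | 0, _ => 1
  | n+1, D => (s - min D (s-1)) * AFF s n (D - min D (s-1))

lemma AFF_succ (s n D : ℕ) :
    AFF s (n+1) D = (s - min D (s-1)) * AFF s n (D - min D (s-1)) := rfl

lemma AFF_zero (s : ℕ) : ∀ n, AFF s n 0 = s ^ n := by
  intro n
  induction n with
  | zero => simp [AFF]
  | succ n ih => simp [AFF_succ, ih, pow_succ, mul_comm]

lemma AFF_step (s : ℕ) (hs : 2 ≤ s) :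
    ∀ n D d, D ≤ n * (s-1) → d ≤ s - 1 →
      AFF s (n+1) (D + d) ≤ (s - d) * AFF s n D := by
  intro n
  induction n with
  | zero =>
    intro D d hD hd
    have hD0 : D = 0 := by omega
    subst hD0
    have hmin : min (0 + d) (s-1) = d := by omega
    rw [AFF_succ, hmin]
    simp [AFF]
  | succ n ih =>
    intro D d hD hd
    have hexp : (n+1) * (s-1) = n * (s-1) + (s-1) := by ring
    by_cases h1 : s - 1 ≤ D
    · -- big case: peel off s-1 from D
      have hmin : min (D + d) (s-1) = s - 1 := by omega
      have h2 : D + d - (s-1) = (D - (s-1)) + d := by omega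
      have h3 : s - (s-1) = 1 := by omega
      have hminD : min D (s-1) = s - 1 := by omega
      have hD' : D - (s-1) ≤ n * (s-1) := by omega
      have key := ih (D - (s-1)) d hD' hd
      calc AFF s (n+2) (D + d) = AFF s (n+1) ((D - (s-1)) + d) := by
            rw [AFF_succ, hmin, h2, h3, one_mul]
        _ ≤ (s - d) * AFF s n (D - (s-1)) := key
        _ = (s - d) * AFF s (n+1) D := by
            rw [AFF_succ s n D, hminD, h3, one_mul]
    · -- D < s - 1
      push_neg at h1
      have hminD : min D (s-1) = D := by omega
      have hRHS : AFF s (n+1) D = (s - D) * s ^ n := by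
        rw [AFF_succ, hminD, Nat.sub_self, AFF_zero]
      by_cases h2 : D + d ≤ s - 1
      · have hmin : min (D + d) (s-1) = D + d := by omega
        have hLHS : AFF s (n+2) (D + d) = (s - (D + d)) * s ^ (n+1) := by
          rw [AFF_succ, hmin, Nat.sub_self, AFF_zero]
        rw [hLHS, hRHS, pow_succ, mul_comm (s ^ n) s, ← mul_assoc, ← mul_assoc]
        apply Nat.mul_le_mul_right
        have hds : d ≤ s := by omega
        have hDs : D ≤ s := by omega
        have hDds : D + d ≤ s := by omega
        zify [hds, hDs, hDds]
        nlinarith [hs, hds, hDs]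
      · push_neg at h2
        have hmin : min (D + d) (s-1) = s - 1 := by omega
        have hE : D + d - (s-1) ≤ s - 1 := by omega
        have hminE : min (D + d - (s-1)) (s-1) = D + d - (s-1) := by omega
        have h3 : s - (s-1) = 1 := by omega
        have hLHS : AFF s (n+2) (D + d) =
            (s - (D + d - (s-1))) * s ^ n := by
          rw [AFF_succ, hmin, h3, one_mul, AFF_succ, hminE, Nat.sub_self,
            AFF_zero]
        rw [hLHS, hRHS, ← mul_assoc]
        apply Nat.mul_le_mul_right
        have hEeq : s - (D + d - (s-1)) = (s - d) + (s - D) - 1 := by omega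
        rw [hEeq]
        have ha : 1 ≤ s - d := by omega
        have hb : 1 ≤ s - D := by omega
        obtain ⟨a, ha2⟩ := Nat.exists_eq_add_of_le ha
        obtain ⟨b, hb2⟩ := Nat.exists_eq_add_of_le hb
        rw [ha2, hb2]
        have hprod : (1+a)*(1+b) = 1 + a + b + a*b := by ring
        rw [hprod]
        omega

lemma AFF_lower (s : ℕ) (hs : 2 ≤ s) :
    ∀ n D (y : Fin n → ℕ), (∀ i, 1 ≤ y i ∧ y i ≤ s) →
      (∑ i, y i) = n * s - D → D ≤ n * (s-1) →
      AFF s n D ≤ ∏ i, y i := by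
  intro n
  induction n with
  | zero =>
    intro D y _ _ hD
    have : D = 0 := by omega
    simp [AFF, this]
  | succ n ih =>
    intro D y hy hsum hD
    have h0 := hy 0
    have hmul : n * (s-1) + n = n * s := by
      have h : (s-1) + 1 = s := by omega
      calc n * (s-1) + n = n * ((s-1)+1) := by ring
        _ = n * s := by rw [h]
    have hexp : (n+1) * (s-1) = n * (s-1) + (s-1) := by ring
    have hexp2 : (n+1) * s = n * s + s := by ring
    have htail : ∀ i : Fin n, 1 ≤ Fin.tail y i ∧ Fin.tail y i ≤ s :=
      fun i => hy i.succ
    have hTlow : (n : ℕ) ≤ ∑ i, Fin.tail y i := by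
      calc (n:ℕ) = ∑ _i : Fin n, 1 := by simp
        _ ≤ ∑ i, Fin.tail y i := Finset.sum_le_sum (fun i _ => (htail i).1)
    have hThigh : (∑ i, Fin.tail y i) ≤ n * s := by
      calc (∑ i, Fin.tail y i) ≤ ∑ _i : Fin n, s :=
            Finset.sum_le_sum (fun i _ => (htail i).2)
        _ = n * s := by simp [mul_comm]
    have hsum' : y 0 + ∑ i, Fin.tail y i = ∑ i, y i := by
      rw [Fin.sum_univ_succ]; rfl
    set T := ∑ i, Fin.tail y i with hT
    set d := s - y 0 with hdd
    set D' := n * s - T with hD'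
    have hD'le : D' ≤ n * (s-1) := by omega
    have hd1 : d ≤ s - 1 := by omega
    have hDeq : D = D' + d := by omega
    have hy0 : y 0 = s - d := by omega
    have key1 := ih D' (Fin.tail y) htail (by omega) hD'le
    have key2 := AFF_step s hs n D' d hD'le hd1
    calc AFF s (n+1) D = AFF s (n+1) (D' + d) := by rw [hDeq]
      _ ≤ (s - d) * AFF s n D' := key2
      _ ≤ (s - d) * ∏ i, Fin.tail y i := Nat.mul_le_mul_left _ key1
      _ = y 0 * ∏ i, Fin.tail y i := by rw [hy0]
      _ = ∏ i, y i := by rw [Fin.prod_univ_succ]; rfl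

lemma AFF_exists (s : ℕ) (hs : 2 ≤ s) :
    ∀ n D, D ≤ n * (s-1) →
      ∃ y : Fin n → ℕ, (∀ i, 1 ≤ y i ∧ y i ≤ s) ∧
        (∑ i, y i) = n * s - D ∧ AFF s n D = ∏ i, y i := by
  intro n
  induction n with
  | zero =>
    intro D hD
    have : D = 0 := by omega
    exact ⟨Fin.elim0, fun i => i.elim0, by simp [this], by simp [AFF, this]⟩
  | succ n ih =>
    intro D hD
    have hexp : (n+1) * (s-1) = n * (s-1) + (s-1) := by ring
    have hmul : n * (s-1) + n = n * s := by
      have h : (s-1) + 1 = s := by omega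
      calc n * (s-1) + n = n * ((s-1)+1) := by ring
        _ = n * s := by rw [h]
    have hexp2 : (n+1) * s = n * s + s := by ring
    have hD' : D - min D (s-1) ≤ n * (s-1) := by omega
    obtain ⟨y', hy', hsum', hprod'⟩ := ih (D - min D (s-1)) hD'
    refine ⟨Fin.cons (s - min D (s-1)) y', ?_, ?_, ?_⟩
    · intro i
      refine Fin.cases ?_ ?_ i
      · simp only [Fin.cons_zero]
        constructor <;> omega
      · intro j; simpa using hy' j
    · rw [Fin.sum_cons, hsum']
      omega
    · rw [Fin.prod_cons, ← hprod', AFF_succ]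

lemma AFF_formula (s : ℕ) (hs : 2 ≤ s) :
    ∀ q n r, r < s - 1 → q ≤ n → (r ≠ 0 → q < n) →
      AFF s n (q * (s-1) + r) =
        if r = 0 then s ^ (n - q) else (s - r) * s ^ (n - q - 1) := by
  intro q
  induction q with
  | zero =>
    intro n r hr hq hq'
    by_cases h : r = 0
    · simp [h, AFF_zero]
    · have hn : 1 ≤ n := hq' h
      obtain ⟨m, rfl⟩ := Nat.exists_eq_add_of_le hn
      simp only [h, if_false, Nat.zero_mul, Nat.zero_add]
      rw [show 1 + m = m + 1 by ring]
      have hminr : min r (s-1) = r := by omega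
      rw [AFF_succ, hminr, Nat.sub_self, AFF_zero]
      norm_num
  | succ q ih =>
    intro n r hr hq hq'
    obtain ⟨m, hm⟩ := Nat.exists_eq_add_of_le hq
    have hm' : n = m + q + 1 := by omega
    subst hm'
    have hpeel : (q+1)*(s-1) = q*(s-1) + (s-1) := by ring
    have hmin : min ((q+1) * (s-1) + r) (s-1) = s - 1 := by omega
    have hsub : (q+1) * (s-1) + r - (s-1) = q * (s-1) + r := by omega
    have h3 : s - (s-1) = 1 := by omega
    have step : AFF s (m+q+1) ((q+1) * (s-1) + r)
        = AFF s (m+q) (q * (s-1) + r) := by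
      rw [AFF_succ, hmin, hsub, h3, one_mul]
    rw [step, ih (m+q) r hr (by omega) (fun _ => by omega)]
    by_cases h : r = 0
    · simp only [h, if_true]
      congr 1
      omega
    · simp only [h, if_false]
      congr 2
      omega

/-- Lemma 4: explicit evaluation of the Alon–Füredi quantity on the uniform
grid.  For `n ≥ 1`, `s ≥ 2`, `0 ≤ D ≤ n(s-1)` with `D = q(s-1) + r`,
`0 ≤ r < s-1`, the minimum of `∏ y i` over integer tuples with `1 ≤ y i ≤ s`
and `∑ y i = n s - D` equals `s^(n-q)` if `r = 0` and `(s-r) s^(n-q-1)`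
otherwise; in particular the minimum is attained. -/
theorem alon_furedi_uniform_grid_min
    (n s D q r : ℕ) (hn : 1 ≤ n) (hs : 2 ≤ s)
    (hD : D ≤ n * (s - 1)) (hqr : D = q * (s - 1) + r) (hr : r < s - 1) :
    IsLeast
      {p : ℕ | ∃ y : Fin n → ℕ, (∀ i, 1 ≤ y i ∧ y i ≤ s) ∧
        (∑ i, y i) = n * s - D ∧ p = ∏ i, y i}
      (if r = 0 then s ^ (n - q) else (s - r) * s ^ (n - q - 1)) := by
  have hs1 : 1 ≤ s - 1 := by omega
  have hqn : q ≤ n := by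
    have h1 : q * (s-1) ≤ n * (s-1) := by omega
    exact Nat.le_of_mul_le_mul_right h1 (by omega)
  have hqn' : r ≠ 0 → q < n := by
    intro hr0
    have h1 : q * (s-1) < n * (s-1) := by omega
    exact Nat.lt_of_mul_lt_mul_right h1
  have hF : AFF s n D
      = if r = 0 then s ^ (n - q) else (s - r) * s ^ (n - q - 1) := by
    rw [hqr]; exact AFF_formula s hs q n r hr hqn hqn'
  constructor
  · obtain ⟨y, hy, hsum, hprod⟩ := AFF_exists s hs n D hD
    exact ⟨y, hy, hsum, by rw [← hF, hprod]⟩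
  · rintro p ⟨y, hy, hsum, rfl⟩
    rw [← hF]
    exact AFF_lower s hs n D y hy hsum hD
end

section
/- Let F be a field, let n ≥ 1, and for each i ∈ {1,…,n} let A_i ⊆ F be a finite nonempty set; set A = A_1 × ⋯ × A_n. Let f ∈ F[x_1,…,x_n] be a polynomial that does not vanish at every point of A, and suppose its total degree satisfies deg f ≤ ∑_{i=1}^n (|A_i| − 1). Then the number of points x ∈ A with f(x) ≠ 0 is at least the minimum of ∏_{i=1}^n y_i over all integer tuples (y_1,…,y_n) with 1 ≤ y_i ≤ |A_i| for every i and ∑_{i=1}^n y_i = ∑_{i=1}^n |A_i| − deg f. -/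
namespace AF
open Finset Polynomial MvPolynomial

variable {F : Type*} [Field F] {n : ℕ}

/-- the feasible-product set -/
def mset {m : ℕ} (a : Fin m → ℕ) (N : ℕ) : Set ℕ :=
  {p : ℕ | ∃ y : Fin m → ℕ, (∀ i, 1 ≤ y i ∧ y i ≤ a i) ∧ (∑ i, y i) = N ∧ p = ∏ i, y i}

lemma exists_le_sum {m : ℕ} (k : ℕ) :
    ∀ (y : Fin m → ℕ) (N : ℕ), (∀ i, 1 ≤ y i) → m ≤ N → (∑ i, y i) = N + k →
    ∃ z : Fin m → ℕ, (∀ i, 1 ≤ z i ∧ z i ≤ y i) ∧ (∑ i, z i) = N := by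
  induction k with
  | zero => exact fun y N h1 _ hs => ⟨y, fun i => ⟨h1 i, le_rfl⟩, by simpa using hs⟩
  | succ k ih =>
    intro y N h1 hN hs
    -- some coordinate has y i ≥ 2
    have h2 : ∃ i, 2 ≤ y i := by
      by_contra h
      push_neg at h
      have hy : ∀ i, y i = 1 := fun i => by have := h i; have := h1 i; omega
      have : (∑ i, y i) = m := by simp [hy]
      omega
    obtain ⟨i, hi⟩ := h2
    set y' := Function.update y i (y i - 1) with hy'
    have hsum' : (∑ j, y' j) = N + k := by
      have hh : (∑ j, y' j) + 1 = ∑ j, y j := by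
        rw [hy', Finset.sum_update_of_mem (Finset.mem_univ i)]
        have := Finset.sum_eq_sum_sdiff_singleton_add (Finset.mem_univ i) y
        omega
      omega
    obtain ⟨z, hz1, hz2⟩ := ih y' N (fun j => by
      rcases eq_or_ne j i with rfl | hj
      · simp [hy']; omega
      · simp [hy', Function.update_of_ne hj]; exact h1 j) hN hsum'
    refine ⟨z, fun j => ⟨(hz1 j).1, (hz1 j).2.trans ?_⟩, hz2⟩
    rcases eq_or_ne j i with rfl | hj
    · simp [hy']
    · simp [hy', Function.update_of_ne hj]

lemma sInf_mset_le_prod {m : ℕ} (a y : Fin m → ℕ) (N : ℕ)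
    (hy : ∀ i, 1 ≤ y i ∧ y i ≤ a i) (hN : m ≤ N) (hNs : N ≤ ∑ i, y i) :
    sInf (mset a N) ≤ ∏ i, y i := by
  obtain ⟨k, hk⟩ := Nat.exists_eq_add_of_le hNs
  obtain ⟨z, hz1, hz2⟩ := exists_le_sum k y N (fun i => (hy i).1) hN hk
  have hmem : (∏ i, z i) ∈ mset a N :=
    ⟨z, fun i => ⟨(hz1 i).1, (hz1 i).2.trans (hy i).2⟩, hz2, rfl⟩
  exact (Nat.sInf_le hmem).trans (Finset.prod_le_prod (fun i _ => Nat.zero_le _)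
    (fun i _ => (hz1 i).2))

lemma mset_nonempty {m : ℕ} (a : Fin m → ℕ) (N : ℕ) (h1 : ∀ i, 1 ≤ a i)
    (hN : m ≤ N) (hNs : N ≤ ∑ i, a i) : (mset a N).Nonempty := by
  obtain ⟨k, hk⟩ := Nat.exists_eq_add_of_le hNs
  obtain ⟨z, hz1, hz2⟩ := exists_le_sum k a N h1 hN hk
  exact ⟨∏ i, z i, z, hz1, hz2, rfl⟩

open scoped Classical in
/-- univariate counting -/
lemma card_filter_eval_ne_zero {F : Type*} [Field F] (q : Polynomial F) (hq : q ≠ 0)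
    (d : ℕ) (hd : q.natDegree ≤ d) (B : Finset F) :
    B.card - d ≤ (B.filter fun a => Polynomial.eval a q ≠ 0).card := by
  classical
  have hsub : (B.filter fun a => Polynomial.eval a q = 0) ⊆ q.roots.toFinset := by
    intro a ha
    simp only [Finset.mem_filter] at ha
    simp [Multiset.mem_toFinset, Polynomial.mem_roots hq, Polynomial.IsRoot, ha.2]
  have h1 : (B.filter fun a => Polynomial.eval a q = 0).card ≤ d :=
    (Finset.card_le_card hsub).trans ((Multiset.toFinset_card_le _).trans
      ((Polynomial.card_roots' q).trans hd))
  have h2 := Finset.card_filter_add_card_filter_not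
    (s := B) (p := fun a => Polynomial.eval a q = 0)
  have h3 : (B.filter fun a => ¬ Polynomial.eval a q = 0).card
      = (B.filter fun a => Polynomial.eval a q ≠ 0).card := by
    apply Finset.card_bij (fun a _ => a) <;> simp_all
  omega


/-- weighted degree bound for a polynomial over multivariate polynomials -/
def Wbd (P : Polynomial (MvPolynomial (Fin n) F)) (D : ℕ) : Prop :=
  ∀ k, P.coeff k ≠ 0 → (P.coeff k).totalDegree + k ≤ D

lemma wbd_modByMonic (G : Polynomial F) (hG : G.Monic) (M : ℕ) :
    ∀ (P : Polynomial (MvPolynomial (Fin n) F)) (D : ℕ), P.natDegree ≤ M → Wbd P D →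
      Wbd (P %ₘ (G.map MvPolynomial.C)) D := by
  induction M using Nat.strong_induction_on with
  | _ M ih =>
  intro P D hPM hPD
  set Gm : Polynomial (MvPolynomial (Fin n) F) := G.map MvPolynomial.C with hGmdef
  have hGmmonic : Gm.Monic := hG.map _
  have hGmdeg : Gm.natDegree = G.natDegree := hG.natDegree_map _
  by_cases hlt : P.degree < Gm.degree
  · rwa [(Polynomial.modByMonic_eq_self_iff hGmmonic).2 hlt]
  push_neg at hlt
  have hP0 : P ≠ 0 := by
    rintro rfl
    rw [Polynomial.degree_zero, le_bot_iff, Polynomial.degree_eq_bot] at hlt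
    exact hGmmonic.ne_zero hlt
  have hgd : Gm.natDegree ≤ P.natDegree := Polynomial.natDegree_le_natDegree hlt
  set d := P.natDegree with hd
  set g := G.natDegree with hgdef
  set e := d - g with he
  set L := P.leadingCoeff with hL
  have hL0 : L ≠ 0 := Polynomial.leadingCoeff_ne_zero.2 hP0
  set Q : Polynomial (MvPolynomial (Fin n) F) := Polynomial.monomial e L * Gm with hQ
  have hegd : e + g = d := by
    have := hGmdeg ▸ hgd; omega
  have hQdeg : Q.degree = P.degree := by
    rw [hQ, hGmmonic.degree_mul, Polynomial.degree_monomial e hL0,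
      Polynomial.degree_eq_natDegree hGmmonic.ne_zero, hGmdeg,
      Polynomial.degree_eq_natDegree hP0, ← hd, ← Nat.cast_add, hegd]
  have hQlc : Q.leadingCoeff = L := by
    rw [hQ, Polynomial.leadingCoeff_mul'
        (by rw [Polynomial.leadingCoeff_monomial, hGmmonic.leadingCoeff, mul_one]; exact hL0),
      Polynomial.leadingCoeff_monomial, hGmmonic.leadingCoeff, mul_one]
  set P' : Polynomial (MvPolynomial (Fin n) F) := P - Q with hP'
  have hmod : P %ₘ Gm = P' %ₘ Gm := by
    rw [hP', Polynomial.sub_modByMonic,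
      (Polynomial.modByMonic_eq_zero_iff_dvd hGmmonic).2 ⟨Polynomial.monomial e L, mul_comm _ _⟩,
      sub_zero]
  have hdeglt : P'.degree < P.degree :=
    Polynomial.degree_sub_lt hQdeg.symm hP0 hQlc.symm
  -- coefficient bound for Q
  have hQcoeff : ∀ k, (Q.coeff k).totalDegree + k ≤ D ∨ Q.coeff k = 0 := by
    intro k
    have hrw : Q.coeff k = if e ≤ k then L * MvPolynomial.C (G.coeff (k - e)) else 0 := by
      have : Q = Polynomial.C L * Gm * Polynomial.X ^ e := by
        rw [hQ]; ring_nf; rw [← Polynomial.C_mul_X_pow_eq_monomial]; ring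
      rw [this, Polynomial.coeff_mul_X_pow', hGmdef]
      simp [Polynomial.coeff_map]
    by_cases hek : e ≤ k
    · rcases le_or_gt k d with hkd | hkd
      · left
        rw [hrw, if_pos hek]
        have h1 : (L * MvPolynomial.C (G.coeff (k - e))).totalDegree ≤ L.totalDegree := by
          refine (MvPolynomial.totalDegree_mul _ _).trans ?_
          simp [MvPolynomial.totalDegree_C]
        have h2 : L.totalDegree + d ≤ D := by
          have := hPD d (by rw [hd] at *; rwa [Polynomial.coeff_natDegree, ← hL])
          exact this
        omega
      · right
        rw [hrw, if_pos hek]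
        have : G.coeff (k - e) = 0 := by
          apply Polynomial.coeff_eq_zero_of_natDegree_lt; omega
        simp [this]
    · right; rw [hrw, if_neg hek]
  have hP'D : Wbd P' D := by
    intro k hk
    have hsub : (P'.coeff k).totalDegree ≤ max (P.coeff k).totalDegree (Q.coeff k).totalDegree := by
      rw [hP', Polynomial.coeff_sub]
      exact MvPolynomial.totalDegree_sub _ _
    have h1 : (P.coeff k).totalDegree + k ≤ D ∨ P.coeff k = 0 := by
      by_cases h : P.coeff k = 0
      · right; exact h
      · left; exact hPD k h
    have h2 := hQcoeff k
    rcases h1 with h1 | h1 <;> rcases h2 with h2 | h2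
    · omega
    · rw [hP', Polynomial.coeff_sub, h2, sub_zero] at hk ⊢; exact hPD k hk
    · rw [hP', Polynomial.coeff_sub, h1, zero_sub, MvPolynomial.totalDegree_neg]
      rw [hP', Polynomial.coeff_sub, h1, zero_sub, neg_ne_zero] at hk
      omega
    · exfalso; apply hk; rw [hP', Polynomial.coeff_sub, h1, h2, sub_zero]
  rw [hmod]
  by_cases hP'0 : P' = 0
  · rw [hP'0, Polynomial.zero_modByMonic]
    intro k hk; simp at hk
  · have : P'.natDegree < d := Polynomial.natDegree_lt_natDegree hP'0 hdeglt
    exact ih P'.natDegree (by omega) P' D le_rfl hP'D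


lemma wbd_finSuccEquiv (f : MvPolynomial (Fin (n+1)) F) :
    Wbd (finSuccEquiv F n f) f.totalDegree :=
  fun k hk => totalDegree_coeff_finSuccEquiv_add_le f k hk

lemma totalDegree_le_of_wbd (f : MvPolynomial (Fin (n+1)) F) (D : ℕ)
    (h : Wbd (finSuccEquiv F n f) D) : f.totalDegree ≤ D := by
  rw [MvPolynomial.totalDegree]
  apply Finset.sup_le
  intro m hm
  have hmem : Finsupp.tail m ∈ ((finSuccEquiv F n f).coeff (m 0)).support := by
    rw [mem_support_coeff_finSuccEquiv, Finsupp.cons_tail]; exact hm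
  have h1 : (Finsupp.tail m).sum (fun _ e => e) ≤
      ((finSuccEquiv F n f).coeff (m 0)).totalDegree := le_totalDegree hmem
  have h2 : ((finSuccEquiv F n f).coeff (m 0)).totalDegree + m 0 ≤ D :=
    h (m 0) (fun hc => by simp [hc] at hmem)
  have h3 : m.sum (fun _ e => e) = m 0 + (Finsupp.tail m).sum (fun _ e => e) := by
    conv_lhs => rw [← Finsupp.cons_tail m]
    rw [Finsupp.sum_cons]
  omega

lemma degreeOf_succ_le (f : MvPolynomial (Fin (n+1)) F) (j : Fin n) (b : ℕ)
    (h : ∀ k, degreeOf j ((finSuccEquiv F n f).coeff k) ≤ b) :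
    degreeOf j.succ f ≤ b := by
  rw [degreeOf_eq_sup]
  apply Finset.sup_le
  intro m hm
  have hmem : Finsupp.tail m ∈ ((finSuccEquiv F n f).coeff (m 0)).support := by
    rw [mem_support_coeff_finSuccEquiv, Finsupp.cons_tail]; exact hm
  have h1 : (Finsupp.tail m) j ≤ degreeOf j ((finSuccEquiv F n f).coeff (m 0)) := by
    rw [degreeOf_eq_sup]; exact Finset.le_sup (f := fun m => m j) hmem
  rw [Finsupp.tail_apply] at h1
  exact h1.trans (h (m 0))


open scoped Classical in
lemma reduce : ∀ (n : ℕ) (A : Fin n → Finset F), (∀ i, (A i).Nonempty) →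
    ∀ f : MvPolynomial (Fin n) F, ∃ r : MvPolynomial (Fin n) F,
      (∀ i, degreeOf i r < (A i).card) ∧ r.totalDegree ≤ f.totalDegree ∧
      ∀ x : Fin n → F, (∀ i, x i ∈ A i) → eval x r = eval x f := by
  intro n
  induction n with
  | zero => exact fun A hA f => ⟨f, fun i => i.elim0, le_rfl, fun x _ => rfl⟩
  | succ n ih =>
    intro A hA f
    set a0 := (A 0).card with ha0
    have ha0pos : 0 < a0 := (hA 0).card_pos
    set G : Polynomial F := ∏ b ∈ A 0, (Polynomial.X - Polynomial.C b) with hGdef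
    have hGmonic : G.Monic := Polynomial.monic_prod_of_monic _ _ fun b _ => monic_X_sub_C b
    have hGdeg : G.natDegree = a0 := by
      rw [hGdef, Polynomial.natDegree_prod_of_monic _ _ fun b _ => monic_X_sub_C b]
      simp [Polynomial.natDegree_X_sub_C, ha0]
    set P : Polynomial (MvPolynomial (Fin n) F) := finSuccEquiv F n f with hPdef
    set Q : Polynomial (MvPolynomial (Fin n) F) := P %ₘ (G.map MvPolynomial.C) with hQdef
    have hWQ : Wbd Q f.totalDegree :=
      wbd_modByMonic G hGmonic P.natDegree P _ le_rfl (wbd_finSuccEquiv f)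
    have hQtop : ∀ k, a0 ≤ k → Q.coeff k = 0 := by
      intro k hk
      apply Polynomial.coeff_eq_zero_of_degree_lt
      refine (Polynomial.degree_modByMonic_lt P (hGmonic.map _)).trans_le ?_
      rw [Polynomial.degree_eq_natDegree (hGmonic.map MvPolynomial.C).ne_zero,
        hGmonic.natDegree_map, hGdeg]
      exact_mod_cast Nat.cast_le.2 hk
    -- reduce coefficients via induction hypothesis
    have H : ∀ k : ℕ, ∃ r' : MvPolynomial (Fin n) F,
        (∀ j, degreeOf j r' < (A j.succ).card) ∧
        r'.totalDegree ≤ (Q.coeff k).totalDegree ∧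
        (∀ x' : Fin n → F, (∀ j, x' j ∈ A j.succ) → eval x' r' = eval x' (Q.coeff k)) ∧
        (Q.coeff k = 0 → r' = 0) := by
      intro k
      by_cases h : Q.coeff k = 0
      · exact ⟨0, fun j => by simp [(hA j.succ).card_pos], by simp, fun x' _ => by simp [h],
          fun _ => rfl⟩
      · obtain ⟨r', h1, h2, h3⟩ := ih (fun j => A j.succ) (fun j => hA j.succ) (Q.coeff k)
        exact ⟨r', h1, h2, h3, fun h0 => absurd h0 h⟩
    choose ρ hρ1 hρ2 hρ3 hρ4 using H
    set R' : Polynomial (MvPolynomial (Fin n) F) :=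
      ∑ k ∈ Finset.range a0, Polynomial.monomial k (ρ k) with hR'def
    have hcoeffR : ∀ j, R'.coeff j = if j < a0 then ρ j else 0 := by
      intro j
      rw [hR'def, Polynomial.finset_sum_coeff]
      simp only [Polynomial.coeff_monomial]
      rw [Finset.sum_ite_eq' (Finset.range a0) j ρ]
      simp [Finset.mem_range]
    set r : MvPolynomial (Fin (n+1)) F := (finSuccEquiv F n).symm R' with hrdef
    have hfs : finSuccEquiv F n r = R' := by rw [hrdef]; exact (finSuccEquiv F n).apply_symm_apply R'
    refine ⟨r, ?_, ?_, ?_⟩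
    · -- degreeOf bounds
      intro i
      refine Fin.cases ?_ ?_ i
      · -- i = 0
        have : degreeOf 0 r = R'.natDegree := (natDegree_finSuccEquiv r).symm.trans (by rw [hfs])
        rw [this]
        by_cases hR0 : R' = 0
        · rw [hR0]; simp only [Polynomial.natDegree_zero]; exact ha0pos
        · by_contra hcon
          push_neg at hcon
          have := Polynomial.leadingCoeff_ne_zero.2 hR0
          rw [Polynomial.leadingCoeff, hcoeffR, if_neg (by omega)] at this
          exact this rfl
      · intro j
        have hb : ∀ k, degreeOf j (R'.coeff k) ≤ (A j.succ).card - 1 := by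
          intro k
          rw [hcoeffR]
          split
          · have := hρ1 k j; omega
          · simp
        have := degreeOf_succ_le r j ((A j.succ).card - 1) (by rw [hfs]; exact hb)
        have hpos := (hA j.succ).card_pos
        omega
    · -- total degree
      apply totalDegree_le_of_wbd
      rw [hfs]
      intro k hk
      rw [hcoeffR] at hk ⊢
      by_cases hka : k < a0
      · rw [if_pos hka] at hk ⊢
        have hQk : Q.coeff k ≠ 0 := fun h0 => hk (by rw [hρ4 k h0])
        have := hWQ k hQk
        have := hρ2 k
        omega
      · rw [if_neg hka] at hk; exact absurd rfl hk
    · -- evaluation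
      intro x hx
      have hxc : x = Fin.cons (x 0) (Fin.tail x) := (Fin.cons_self_tail x).symm
      have hmapeq : R'.map (eval (Fin.tail x)) = Q.map (eval (Fin.tail x)) := by
        ext j
        rw [Polynomial.coeff_map, Polynomial.coeff_map, hcoeffR]
        by_cases hj : j < a0
        · rw [if_pos hj]
          exact hρ3 j (Fin.tail x) (fun i => hx i.succ)
        · rw [if_neg hj, hQtop j (by omega)]
      have hGeval : Polynomial.eval (x 0) (((G.map MvPolynomial.C).map (eval (Fin.tail x)))) = 0 := by
        rw [Polynomial.map_map]
        have hcomp : (eval (Fin.tail x) : MvPolynomial (Fin n) F →+* F).comp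
            (MvPolynomial.C : F →+* MvPolynomial (Fin n) F) = RingHom.id F := by
          ext c; simp
        rw [hcomp, Polynomial.map_id, hGdef, Polynomial.eval_prod]
        exact Finset.prod_eq_zero (hx 0) (by simp)
      calc eval x r = Polynomial.eval (x 0) (R'.map (eval (Fin.tail x))) := by
            conv_lhs => rw [hxc, eval_eq_eval_mv_eval' (Fin.tail x) (x 0) r]
            rw [hfs]
        _ = Polynomial.eval (x 0) (Q.map (eval (Fin.tail x))) := by rw [hmapeq]
        _ = eval x f := by
            conv_rhs => rw [hxc, eval_eq_eval_mv_eval' (Fin.tail x) (x 0) f]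
            rw [← hPdef]
            conv_rhs => rw [← Polynomial.modByMonic_add_div P (G.map MvPolynomial.C)]
            rw [Polynomial.map_add, Polynomial.map_mul, Polynomial.eval_add, Polynomial.eval_mul,
              hGeval, zero_mul, add_zero, ← hQdef]

lemma totalDegree_le_sum_degreeOf {m : ℕ} (f : MvPolynomial (Fin m) F) :
    f.totalDegree ≤ ∑ i, degreeOf i f := by
  rw [MvPolynomial.totalDegree]
  apply Finset.sup_le
  intro s hs
  have h1 : s.sum (fun _ e => e) = ∑ i, s i :=
    Finsupp.sum_fintype s (fun _ e => e) (fun _ => rfl)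
  rw [h1]
  exact Finset.sum_le_sum fun i _ =>
    (degreeOf_eq_sup i f) ▸ Finset.le_sup (f := fun m => m i) hs

open scoped Classical in
lemma main : ∀ (n : ℕ) (A : Fin n → Finset F), (∀ i, (A i).Nonempty) →
    ∀ f : MvPolynomial (Fin n) F, f ≠ 0 → (∀ i, degreeOf i f < (A i).card) →
    sInf (mset (fun i => (A i).card) ((∑ i, (A i).card) - f.totalDegree))
      ≤ ((Fintype.piFinset A).filter (fun x => eval x f ≠ 0)).card := by
  intro n
  induction n with
  | zero =>
    intro A hA f hf0 _
    have hfC : f = MvPolynomial.C (constantCoeff f) := eq_C_of_isEmpty f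
    have htot : f.totalDegree = 0 := by rw [hfC]; exact totalDegree_C _
    have hc0 : constantCoeff f ≠ 0 := fun h => hf0 (by rw [hfC, h, map_zero])
    have h1 : (1 : ℕ) ∈ mset (fun i : Fin 0 => (A i).card) ((∑ i, (A i).card) - f.totalDegree) := by
      refine ⟨fun i => i.elim0, fun i => i.elim0, ?_, ?_⟩ <;> simp [htot]
    refine (Nat.sInf_le h1).trans ?_
    rw [Nat.one_le_iff_ne_zero, ← Nat.pos_iff_ne_zero, Finset.card_pos]
    refine ⟨fun i => i.elim0, Finset.mem_filter.2 ⟨Fintype.mem_piFinset.2 fun i => i.elim0, ?_⟩⟩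
    rw [hfC]; simpa using hc0
  | succ n ih =>
    intro A hA f hf0 hdf
    set a : Fin (n+1) → ℕ := fun i => (A i).card with hadef
    set P : Polynomial (MvPolynomial (Fin n) F) := finSuccEquiv F n f with hPdef
    have hP0 : P ≠ 0 := by
      rw [hPdef, ne_eq, EmbeddingLike.map_eq_zero_iff]; exact hf0
    set d : ℕ := P.natDegree with hddef
    have hd : d = degreeOf 0 f := natDegree_finSuccEquiv f
    have hda0 : d < a 0 := hd ▸ hdf 0
    set g : MvPolynomial (Fin n) F := P.leadingCoeff with hgdef
    have hg0 : g ≠ 0 := Polynomial.leadingCoeff_ne_zero.2 hP0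
    have hgcoeff : g = P.coeff d := rfl
    have hgdeg : ∀ j : Fin n, degreeOf j g < (A j.succ).card := by
      intro j
      exact (degreeOf_coeff_finSuccEquiv f j d).trans_lt (hdf j.succ)
    have hgtot : g.totalDegree + d ≤ f.totalDegree :=
      totalDegree_coeff_finSuccEquiv_add_le f d (hgcoeff ▸ hg0)
    -- induction hypothesis
    have hIH := ih (fun j => A j.succ) (fun j => hA j.succ) g hg0 hgdeg
    set a' : Fin n → ℕ := fun j => (A j.succ).card with ha'def
    set N' : ℕ := (∑ j, a' j) - g.totalDegree with hN'def
    set U' : Finset (Fin n → F) :=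
      (Fintype.piFinset (fun j => A j.succ)).filter (fun x' => eval x' g ≠ 0) with hU'def
    -- counting
    set U : Finset (Fin (n+1) → F) := (Fintype.piFinset A).filter (fun x => eval x f ≠ 0) with hUdef
    have key : ∀ x' ∈ U', a 0 - d ≤ ((A 0).filter (fun b => eval (Fin.cons b x') f ≠ 0)).card := by
      intro x' hx'
      have hx'g : eval x' g ≠ 0 := (Finset.mem_filter.1 hx').2
      set q : Polynomial F := P.map (eval x') with hqdef
      have hq0 : q ≠ 0 := fun h => hx'g (by
        have := congrArg (fun p => Polynomial.coeff p d) h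
        simpa [hqdef, Polynomial.coeff_map, hgcoeff] using this)
      have hqd : q.natDegree ≤ d := Polynomial.natDegree_map_le
      have := card_filter_eval_ne_zero q hq0 d hqd (A 0)
      refine this.trans (le_of_eq (Finset.card_bij (fun b _ => b) ?_ (by simp) ?_))
      · intro b hb
        simp only [Finset.mem_filter] at hb ⊢
        refine ⟨hb.1, ?_⟩
        rw [eval_eq_eval_mv_eval' x' b f, ← hPdef, ← hqdef]
        exact hb.2
      · intro b hb
        simp only [Finset.mem_filter] at hb
        refine ⟨b, Finset.mem_filter.2 ⟨hb.1, ?_⟩, rfl⟩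
        rw [eval_eq_eval_mv_eval' x' b f, ← hPdef, ← hqdef] at hb
        exact hb.2
    have hcount : U'.card * (a 0 - d) ≤ U.card := by
      set B : (Fin n → F) → Finset (Fin (n+1) → F) := fun x' =>
        ((A 0).filter (fun b => eval (Fin.cons b x') f ≠ 0)).image (fun b => Fin.cons b x')
        with hBdef
      have hBsub : U'.biUnion B ⊆ U := by
        intro z hz
        rw [Finset.mem_biUnion] at hz
        obtain ⟨x', hx', hzB⟩ := hz
        rw [hBdef, Finset.mem_image] at hzB
        obtain ⟨b, hb, rfl⟩ := hzB
        rw [Finset.mem_filter] at hb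
        refine Finset.mem_filter.2 ⟨Fintype.mem_piFinset.2 ?_, hb.2⟩
        intro i
        refine Fin.cases ?_ ?_ i
        · simpa using hb.1
        · intro j
          simpa using (Fintype.mem_piFinset.1 (Finset.mem_filter.1 hx').1) j
      have hdisj : ∀ x₁ ∈ U', ∀ x₂ ∈ U', x₁ ≠ x₂ → Disjoint (B x₁) (B x₂) := by
        intro x₁ _ x₂ _ hne
        rw [Finset.disjoint_left]
        intro z hz1 hz2
        rw [hBdef, Finset.mem_image] at hz1 hz2
        obtain ⟨b₁, _, rfl⟩ := hz1
        obtain ⟨b₂, _, he⟩ := hz2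
        apply hne
        have := congrArg Fin.tail he
        simpa [Fin.tail_cons] using this.symm
      have hBcard : ∀ x' ∈ U', a 0 - d ≤ (B x').card := by
        intro x' hx'
        rw [hBdef, Finset.card_image_of_injective _ (fun b₁ b₂ h => by
          have := congrArg (fun z => z 0) h; simpa using this)]
        exact key x' hx'
      calc U'.card * (a 0 - d) = ∑ _x' ∈ U', (a 0 - d) := by rw [Finset.sum_const, smul_eq_mul]
        _ ≤ ∑ x' ∈ U', (B x').card := Finset.sum_le_sum hBcard
        _ = (U'.biUnion B).card := (Finset.card_biUnion hdisj).symm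
        _ ≤ U.card := Finset.card_le_card hBsub
    -- arithmetic
    have hgsum : g.totalDegree ≤ ∑ j, (a' j - 1) := by
      refine (totalDegree_le_sum_degreeOf g).trans (Finset.sum_le_sum fun j _ => ?_)
      show degreeOf j g ≤ (A j.succ).card - 1
      have := hgdeg j; have := (hA j.succ).card_pos
      omega
    have ha'pos : ∀ j, 1 ≤ a' j := fun j => (hA j.succ).card_pos
    have hsplit : ∑ j, (a' j - 1) + n = ∑ j, a' j := by
      have : ∑ j, ((a' j - 1) + 1) = ∑ j, a' j :=
        Finset.sum_congr rfl fun j _ => by have := ha'pos j; omega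
      rw [← this, Finset.sum_add_distrib]
      simp
    have hfsum : f.totalDegree ≤ ∑ i, (a i - 1) := by
      refine (totalDegree_le_sum_degreeOf f).trans (Finset.sum_le_sum fun i _ => ?_)
      show degreeOf i f ≤ (A i).card - 1
      have := hdf i; have := (hA i).card_pos
      omega
    have hapos : ∀ i, 1 ≤ a i := fun i => (hA i).card_pos
    have hsplit' : ∑ i, (a i - 1) + (n+1) = ∑ i, a i := by
      have : ∑ i, ((a i - 1) + 1) = ∑ i, a i :=
        Finset.sum_congr rfl fun i _ => by have := hapos i; omega
      rw [← this, Finset.sum_add_distrib]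
      simp
    have hNn' : n ≤ N' := by
      rw [hN'def]; omega
    have hN'le : N' ≤ ∑ j, a' j := Nat.sub_le _ _
    obtain ⟨z, hz⟩ := mset_nonempty a' N' ha'pos hNn' hN'le
    have hzInf : sInf (mset a' N') ∈ mset a' N' := Nat.sInf_mem ⟨z, hz⟩
    obtain ⟨y', hy', hsum', hprod'⟩ := hzInf
    set N : ℕ := (∑ i, a i) - f.totalDegree with hNdef
    have hsumsucc : ∑ i, a i = a 0 + ∑ j, a' j := by
      rw [Fin.sum_univ_succ]
    set y : Fin (n+1) → ℕ := Fin.cons (a 0 - d) y' with hydef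
    have hyfeas : ∀ i, 1 ≤ y i ∧ y i ≤ a i := by
      intro i
      refine Fin.cases ?_ ?_ i
      · rw [hydef]; simp only [Fin.cons_zero]; omega
      · intro j; rw [hydef]; simp only [Fin.cons_succ]; exact hy' j
    have hysum : ∑ i, y i = (a 0 - d) + N' := by
      rw [hydef, Fin.sum_cons, hsum']
    have hNy : N ≤ ∑ i, y i := by
      rw [hysum, hNdef, hsumsucc, hN'def]
      have h1 : g.totalDegree + d ≤ f.totalDegree := hgtot
      have h2 : g.totalDegree ≤ ∑ j, a' j := le_trans hgsum (by omega)
      omega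
    have hNn : n + 1 ≤ N := by rw [hNdef]; omega
    calc sInf (mset a N) ≤ ∏ i, y i := sInf_mset_le_prod a y N hyfeas hNn hNy
      _ = (a 0 - d) * ∏ j, y' j := by rw [hydef, Fin.prod_cons]
      _ = (a 0 - d) * sInf (mset a' N') := by rw [← hprod']
      _ ≤ (a 0 - d) * U'.card := Nat.mul_le_mul_left _ hIH
      _ = U'.card * (a 0 - d) := Nat.mul_comm _ _
      _ ≤ U.card := hcount


end AF

/-- **Alon–Füredi theorem** (Lemma 3).  Let `A = A 1 × ⋯ × A n` be a finite
grid over a field `F` and let `f` be a polynomial not vanishing at every point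
of `A`, with total degree `deg f ≤ ∑ (|A i| - 1)`.  Then the number of points
of `A` at which `f` is nonzero is at least
`𝔪(|A 1|, …, |A n|; ∑ |A i| - deg f)`, the minimum of `∏ y i` over integer
tuples with `1 ≤ y i ≤ |A i|` and `∑ y i = ∑ |A i| - deg f`. -/
theorem alon_furedi
    {F : Type*} [Field F] (n : ℕ) (hn : 1 ≤ n)
    (A : Fin n → Finset F) (hA : ∀ i, (A i).Nonempty)
    (f : MvPolynomial (Fin n) F)
    (hnv : ∃ x : Fin n → F, (∀ i, x i ∈ A i) ∧ MvPolynomial.eval x f ≠ 0)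
    (hdeg : f.totalDegree ≤ ∑ i, ((A i).card - 1)) :
    sInf {p : ℕ | ∃ y : Fin n → ℕ, (∀ i, 1 ≤ y i ∧ y i ≤ (A i).card) ∧
        (∑ i, y i) = (∑ i, (A i).card) - f.totalDegree ∧ p = ∏ i, y i}
      ≤ {x : Fin n → F | (∀ i, x i ∈ A i) ∧
          MvPolynomial.eval x f ≠ 0}.ncard := by
  classical
  open MvPolynomial in
  obtain ⟨r, hr1, hr2, hr3⟩ := AF.reduce n A hA f
  obtain ⟨x0, hx0A, hx0⟩ := hnv
  have hr0 : r ≠ 0 := by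
    intro h
    apply hx0
    rw [← hr3 x0 hx0A, h, map_zero]
  have hmain := AF.main n A hA r hr0 hr1
  -- replace the filter over r by the filter over f
  have hfil : ((Fintype.piFinset A).filter (fun x => MvPolynomial.eval x r ≠ 0))
      = ((Fintype.piFinset A).filter (fun x => MvPolynomial.eval x f ≠ 0)) := by
    apply Finset.filter_congr
    intro x hx
    simp [hr3 x (Fintype.mem_piFinset.1 hx)]
  -- rewrite the set as a finset
  have hset : {x : Fin n → F | (∀ i, x i ∈ A i) ∧ MvPolynomial.eval x f ≠ 0}
      = ↑((Fintype.piFinset A).filter (fun x => MvPolynomial.eval x f ≠ 0)) := by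
    ext x
    simp [Fintype.mem_piFinset]
  rw [hset, Set.ncard_coe_finset]
  -- arithmetic: compare the two infima
  have hapos : ∀ i, 1 ≤ (A i).card := fun i => (hA i).card_pos
  have hsplit : ∑ i, ((A i).card - 1) + n = ∑ i, (A i).card := by
    have h : ∑ i, (((A i).card - 1) + 1) = ∑ i, (A i).card :=
      Finset.sum_congr rfl fun i _ => by have := hapos i; omega
    rw [← h, Finset.sum_add_distrib]
    simp
  have hrdeg : r.totalDegree ≤ ∑ i, ((A i).card - 1) := hr2.trans hdeg
  have hNr_n : n ≤ (∑ i, (A i).card) - r.totalDegree := by omega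
  obtain ⟨z, hz⟩ := AF.mset_nonempty (fun i => (A i).card)
    ((∑ i, (A i).card) - r.totalDegree) hapos hNr_n (Nat.sub_le _ _)
  have hzInf := Nat.sInf_mem (⟨z, hz⟩ : (AF.mset (fun i => (A i).card)
    ((∑ i, (A i).card) - r.totalDegree)).Nonempty)
  obtain ⟨y', hy', hsum', hprod'⟩ := hzInf
  have hstep : sInf (AF.mset (fun i => (A i).card) ((∑ i, (A i).card) - f.totalDegree))
      ≤ sInf (AF.mset (fun i => (A i).card) ((∑ i, (A i).card) - r.totalDegree)) := by
    rw [hprod']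
    apply AF.sInf_mset_le_prod _ _ _ hy' (by omega)
    rw [hsum']
    omega
  refine hstep.trans (le_trans ?_ (le_of_eq (congrArg Finset.card hfil)))
  exact hmain
end

section
/- Let F be a field, let n ≥ 1 and m_t ≥ 1 be integers, let S ⊆ F be a finite set with |S| = m_t + 1, and let f ∈ F[x_1,…,x_n] be a nonzero polynomial whose degree in every variable x_i is at most m_t. Then the number of points x ∈ S^n with f(x) ≠ 0 is at least the minimum of ∏_{i=1}^n y_i over all integer tuples (y_1,…,y_n) with 1 ≤ y_i ≤ m_t + 1 for all i and ∑_{i=1}^n y_i = n(m_t + 1) − deg f, where deg f denotes the total degree of f. -/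
open MvPolynomial Finset
open scoped Classical

/-- The set of attainable products. -/
def AFset (n mt N : ℕ) : Set ℕ :=
  {p : ℕ | ∃ y : Fin n → ℕ, (∀ i, 1 ≤ y i ∧ y i ≤ mt + 1) ∧
      (∑ i, y i) = N ∧ p = ∏ i, y i}

lemma AFset_nonempty (mt : ℕ) : ∀ n N : ℕ, n ≤ N → N ≤ n * (mt + 1) →
    (AFset n mt N).Nonempty := by
  intro n
  induction n with
  | zero =>
    intro N h1 h2
    refine ⟨1, fun i => i.elim0, fun i => i.elim0, ?_, by simp⟩
    simp only [Finset.univ_eq_empty, Finset.sum_empty]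
    omega
  | succ n ih =>
    intro N h1 h2
    have hr : (n + 1) * (mt + 1) = n * (mt + 1) + (mt + 1) := by ring
    have hn : n ≤ n * (mt + 1) := Nat.le_mul_of_pos_right n (by omega)
    rcases le_or_gt (mt + 1) (N - n) with h | h
    · obtain ⟨p, y, hy, hsum, -⟩ := ih (N - (mt + 1)) (by omega) (by omega)
      refine ⟨_, Fin.cons (mt + 1) y, ?_, ?_, rfl⟩
      · intro i
        refine Fin.cases ?_ ?_ i
        · simp
        · intro j; simpa using hy j
      · rw [Fin.sum_cons, hsum]; omega
    · obtain ⟨p, y, hy, hsum, -⟩ := ih n le_rfl hn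
      refine ⟨_, Fin.cons (N - n) y, ?_, ?_, rfl⟩
      · intro i
        refine Fin.cases ?_ ?_ i
        · simp; omega
        · intro j; simpa using hy j
      · rw [Fin.sum_cons, hsum]; omega

lemma exists_tuple_reduce (n : ℕ) : ∀ (k : ℕ) (y : Fin n → ℕ), (∀ i, 1 ≤ y i) →
    ∀ N, n ≤ N → (∑ i, y i) = N + k →
    ∃ y' : Fin n → ℕ, (∀ i, 1 ≤ y' i ∧ y' i ≤ y i) ∧ (∑ i, y' i) = N := by
  intro k
  induction k with
  | zero =>
    intro y hy N _ hsum
    exact ⟨y, fun i => ⟨hy i, le_rfl⟩, by omega⟩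
  | succ k ih =>
    intro y hy N hN hsum
    have hex : ∃ i, 2 ≤ y i := by
      by_contra h
      push_neg at h
      have : (∑ i, y i) ≤ ∑ _i : Fin n, 1 :=
        Finset.sum_le_sum fun i _ => by have := h i; omega
      simp at this; omega
    obtain ⟨i, hi⟩ := hex
    set y2 : Fin n → ℕ := Function.update y i (y i - 1) with hy2
    have hy2le : ∀ j, 1 ≤ y2 j ∧ y2 j ≤ y j := by
      intro j
      by_cases hj : j = i
      · subst hj; simp [hy2]; omega
      · simp [hy2, Function.update_of_ne hj]; exact hy j
    have hsum2 : (∑ j, y2 j) = N + k := by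
      have h1 : (∑ j, y2 j) = y2 i + ∑ j ∈ Finset.univ.erase i, y2 j :=
        (Finset.add_sum_erase _ _ (Finset.mem_univ i)).symm
      have h2 : (∑ j, y j) = y i + ∑ j ∈ Finset.univ.erase i, y j :=
        (Finset.add_sum_erase _ _ (Finset.mem_univ i)).symm
      have h3 : ∑ j ∈ Finset.univ.erase i, y2 j = ∑ j ∈ Finset.univ.erase i, y j :=
        Finset.sum_congr rfl fun j hj =>
          Function.update_of_ne (Finset.ne_of_mem_erase hj) _ _
      have h4 : y2 i = y i - 1 := Function.update_self _ _ _
      omega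
    obtain ⟨y', hy', hsum'⟩ := ih y2 (fun j => (hy2le j).1) N hN hsum2
    exact ⟨y', fun j => ⟨(hy' j).1, le_trans (hy' j).2 (hy2le j).2⟩, hsum'⟩

lemma AFinf_mono (mt : ℕ) (n N1 N2 : ℕ) (h1 : n ≤ N1) (h12 : N1 ≤ N2)
    (h2 : N2 ≤ n * (mt + 1)) :
    sInf (AFset n mt N1) ≤ sInf (AFset n mt N2) := by
  have hne : (AFset n mt N2).Nonempty := AFset_nonempty mt n N2 (le_trans h1 h12) h2
  obtain ⟨y, hy, hsum, hprod⟩ := Nat.sInf_mem hne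
  obtain ⟨y', hy', hsum'⟩ := exists_tuple_reduce n (N2 - N1) y (fun i => (hy i).1) N1 h1
    (by omega)
  have hmem : (∏ i, y' i) ∈ AFset n mt N1 :=
    ⟨y', fun i => ⟨(hy' i).1, le_trans (hy' i).2 (hy i).2⟩, hsum', rfl⟩
  calc sInf (AFset n mt N1) ≤ ∏ i, y' i := Nat.sInf_le hmem
    _ ≤ ∏ i, y i := Finset.prod_le_prod (fun i _ => Nat.zero_le _) fun i _ => (hy' i).2
    _ = sInf (AFset n mt N2) := hprod.symm

lemma AFinf_cons (mt n N c : ℕ) (hc1 : 1 ≤ c) (hc2 : c ≤ mt + 1)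
    (hne : (AFset n mt N).Nonempty) :
    sInf (AFset (n + 1) mt (N + c)) ≤ c * sInf (AFset n mt N) := by
  obtain ⟨y, hy, hsum, hprod⟩ := Nat.sInf_mem hne
  refine Nat.sInf_le ⟨Fin.cons c y, ?_, ?_, ?_⟩
  · intro i
    refine Fin.cases ?_ ?_ i
    · simp; omega
    · intro j; simpa using hy j
  · rw [Fin.sum_cons, hsum]; omega
  · rw [Fin.prod_cons, hprod]

lemma totalDegree_le_of_degreeOf {F : Type*} [CommSemiring F] (n mt : ℕ)
    (f : MvPolynomial (Fin n) F) (hdeg : ∀ i, f.degreeOf i ≤ mt) :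
    f.totalDegree ≤ n * mt := by
  apply Finset.sup_le
  intro m hm
  have h1 : (m.sum fun _ e => e) = ∑ i, m i := Finsupp.sum_fintype _ _ fun _ => rfl
  rw [h1]
  calc (∑ i, m i) ≤ ∑ _i : Fin n, mt :=
        Finset.sum_le_sum fun i _ => le_trans (monomial_le_degreeOf i hm) (hdeg i)
    _ = n * mt := by simp [Finset.sum_const, mul_comm]

/-- The Alon–Füredi theorem, Finset form. -/
lemma alon_furedi_s8 {F : Type*} [Field F] (mt : ℕ) (hmt : 1 ≤ mt) :
    ∀ (n : ℕ) (S : Finset F), S.card = mt + 1 →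
    ∀ (f : MvPolynomial (Fin n) F), f ≠ 0 → (∀ i, f.degreeOf i ≤ mt) →
    sInf (AFset n mt (n * (mt + 1) - f.totalDegree)) ≤
      ((Fintype.piFinset fun _ : Fin n => S).filter fun x => eval x f ≠ 0).card := by
  intro n
  induction n with
  | zero =>
    intro S hS f hf hdeg
    obtain ⟨c, rfl⟩ := MvPolynomial.C_surjective (Fin 0) f
    have hc : c ≠ 0 := fun h => hf (by rw [h, map_zero])
    have hcard : ((Fintype.piFinset fun _ : Fin 0 => S).filter
        fun x => eval x (C c : MvPolynomial (Fin 0) F) ≠ 0).card = 1 := by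
      rw [Finset.filter_true_of_mem (fun x _ => by simp [hc])]
      simp
    rw [hcard]
    refine Nat.sInf_le ⟨fun i => i.elim0, fun i => i.elim0, ?_, by simp⟩
    simp
  | succ n ih =>
    intro S hS f hf hdeg
    set q := finSuccEquiv F n f with hq
    have hq0 : q ≠ 0 := by
      intro h
      apply hf
      have := (finSuccEquiv F n).injective (a₁ := f) (a₂ := 0) (by rw [map_zero]; exact h)
      exact this
    set d := q.natDegree with hd
    have hdmt : d ≤ mt := by
      rw [hd, hq, natDegree_finSuccEquiv]; exact hdeg 0
    set fd := q.coeff d with hfd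
    have hfd0 : fd ≠ 0 := by
      rw [hfd, hd]; exact Polynomial.leadingCoeff_ne_zero.mpr hq0
    have hfddeg : ∀ i, fd.degreeOf i ≤ mt := by
      intro i
      calc fd.degreeOf i ≤ f.degreeOf i.succ := degreeOf_coeff_finSuccEquiv f i d
        _ ≤ mt := hdeg i.succ
    have htot : fd.totalDegree + d ≤ f.totalDegree :=
      totalDegree_coeff_finSuccEquiv_add_le f d hfd0
    -- notation
    set D := f.totalDegree with hD
    set D' := fd.totalDegree with hD'
    have hDle : D ≤ (n + 1) * mt := totalDegree_le_of_degreeOf (n + 1) mt f hdeg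
    have hD'le : D' ≤ n * mt := totalDegree_le_of_degreeOf n mt fd hfddeg
    set N := (n + 1) * (mt + 1) - D with hN
    set N' := n * (mt + 1) - D' with hN'
    have hr1 : (n + 1) * (mt + 1) = n * (mt + 1) + mt + 1 := by ring
    have hr2 : n * (mt + 1) = n * mt + n := by ring
    have hr3 : (n + 1) * mt = n * mt + mt := by ring
    -- the key numeric facts
    have hNge : n + 1 ≤ N := by omega
    have hN'ge : n ≤ N' := by omega
    have hN'le : N' ≤ n * (mt + 1) := by omega
    have hNN' : N ≤ N' + (mt + 1 - d) := by omega
    -- the grid counts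
    set T := (Fintype.piFinset fun _ : Fin n => S).filter fun a => eval a fd ≠ 0 with hT
    have hIH : sInf (AFset n mt N') ≤ T.card := ih S hS fd hfd0 hfddeg
    -- counting in the big grid
    set big := (Fintype.piFinset fun _ : Fin (n + 1) => S).filter
      fun x => eval x f ≠ 0 with hbig
    have hfiber : ∀ a ∈ T, mt + 1 - d ≤ (S.filter fun b =>
        eval (Fin.cons b a : Fin (n + 1) → F) f ≠ 0).card := by
      intro a ha
      rw [hT, Finset.mem_filter] at ha
      set g : Polynomial F := q.map (eval a) with hg
      have hgd : g.coeff d ≠ 0 := by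
        rw [hg, Polynomial.coeff_map]; exact ha.2
      have hg0 : g ≠ 0 := fun h => hgd (by rw [h, Polynomial.coeff_zero])
      have hgdeg : g.natDegree ≤ d := Polynomial.natDegree_map_le
      have hzsub : (S.filter fun b => Polynomial.eval b g = 0) ⊆ g.roots.toFinset := by
        intro b hb
        rw [Finset.mem_filter] at hb
        rw [Multiset.mem_toFinset, Polynomial.mem_roots hg0]
        exact hb.2
      have hzcard : (S.filter fun b => Polynomial.eval b g = 0).card ≤ d :=
        le_trans (Finset.card_le_card hzsub)
          (le_trans (Multiset.toFinset_card_le _)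
            (le_trans (Polynomial.card_roots' g) hgdeg))
      have heval : ∀ b : F, eval (Fin.cons b a : Fin (n + 1) → F) f = Polynomial.eval b g := by
        intro b; rw [hg, hq]; exact eval_eq_eval_mv_eval' a b f
      have hsplit : (S.filter fun b => eval (Fin.cons b a : Fin (n + 1) → F) f ≠ 0).card
          + (S.filter fun b => Polynomial.eval b g = 0).card = S.card := by
        have : (S.filter fun b => eval (Fin.cons b a : Fin (n + 1) → F) f ≠ 0)
            = S.filter fun b => ¬ (Polynomial.eval b g = 0) := by
          apply Finset.filter_congr; intro b _; simp [heval b]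
        rw [this]
        rw [add_comm]
        exact Finset.card_filter_add_card_filter_not _
      omega
    have hbigcard : T.card * (mt + 1 - d) ≤ big.card := by
      set U := T.biUnion fun a => (S.filter fun b =>
        eval (Fin.cons b a : Fin (n + 1) → F) f ≠ 0).image
          (fun b => (Fin.cons b a : Fin (n + 1) → F)) with hU
      have hdisj : ∀ a1 ∈ (T : Set (Fin n → F)), ∀ a2 ∈ (T : Set (Fin n → F)), a1 ≠ a2 →
          Disjoint ((S.filter fun b => eval (Fin.cons b a1 : Fin (n + 1) → F) f ≠ 0).image
              (fun b => (Fin.cons b a1 : Fin (n + 1) → F)))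
            ((S.filter fun b => eval (Fin.cons b a2 : Fin (n + 1) → F) f ≠ 0).image
              (fun b => (Fin.cons b a2 : Fin (n + 1) → F))) := by
        intro a1 _ a2 _ hne
        rw [Finset.disjoint_left]
        intro x hx1 hx2
        obtain ⟨b1, -, rfl⟩ := Finset.mem_image.mp hx1
        obtain ⟨b2, -, he⟩ := Finset.mem_image.mp hx2
        apply hne
        have := congrArg Fin.tail he
        simpa [Fin.tail_cons] using this.symm
      have hUcard : U.card = ∑ a ∈ T, ((S.filter fun b =>
          eval (Fin.cons b a : Fin (n + 1) → F) f ≠ 0).image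
            (fun b => (Fin.cons b a : Fin (n + 1) → F))).card :=
        Finset.card_biUnion hdisj
      have himgcard : ∀ a ∈ T, ((S.filter fun b =>
          eval (Fin.cons b a : Fin (n + 1) → F) f ≠ 0).image
            (fun b => (Fin.cons b a : Fin (n + 1) → F))).card
          = (S.filter fun b => eval (Fin.cons b a : Fin (n + 1) → F) f ≠ 0).card := by
        intro a _
        apply Finset.card_image_of_injective
        intro b1 b2 h
        have := congrFun h 0
        simpa using this
      have hUsub : U ⊆ big := by
        intro x hx
        rw [hU, Finset.mem_biUnion] at hx
        obtain ⟨a, ha, hx⟩ := hx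
        obtain ⟨b, hb, rfl⟩ := Finset.mem_image.mp hx
        rw [Finset.mem_filter] at hb
        rw [hT, Finset.mem_filter] at ha
        rw [hbig, Finset.mem_filter]
        constructor
        · rw [Fintype.mem_piFinset]
          intro i
          refine Fin.cases ?_ ?_ i
          · simpa using hb.1
          · intro j
            simpa using (Fintype.mem_piFinset.mp ha.1) j
        · exact hb.2
      calc T.card * (mt + 1 - d) = ∑ _a ∈ T, (mt + 1 - d) := by
            rw [Finset.sum_const, smul_eq_mul]
        _ ≤ ∑ a ∈ T, (S.filter fun b =>
              eval (Fin.cons b a : Fin (n + 1) → F) f ≠ 0).card :=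
            Finset.sum_le_sum hfiber
        _ = U.card := by
            rw [hUcard]; exact (Finset.sum_congr rfl himgcard).symm
        _ ≤ big.card := Finset.card_le_card hUsub
    -- now the arithmetic with the min-product function
    have hne' : (AFset n mt N').Nonempty := AFset_nonempty mt n N' hN'ge hN'le
    rcases le_or_gt N (N' + 1) with hcase | hcase
    · -- use c = 1
      calc sInf (AFset (n + 1) mt N) ≤ sInf (AFset (n + 1) mt (N' + 1)) :=
            AFinf_mono mt (n + 1) N (N' + 1) hNge hcase (by omega)
        _ ≤ 1 * sInf (AFset n mt N') := AFinf_cons mt n N' 1 le_rfl (by omega) hne'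
        _ ≤ (mt + 1 - d) * sInf (AFset n mt N') :=
            Nat.mul_le_mul_right _ (by omega)
        _ ≤ (mt + 1 - d) * T.card := Nat.mul_le_mul_left _ hIH
        _ ≤ big.card := by rw [mul_comm]; exact hbigcard
    · -- use c = N - N'
      have hc1 : 1 ≤ N - N' := by omega
      have hc2 : N - N' ≤ mt + 1 - d := by omega
      have hNN : N' + (N - N') = N := by omega
      calc sInf (AFset (n + 1) mt N) = sInf (AFset (n + 1) mt (N' + (N - N'))) := by
            rw [hNN]
        _ ≤ (N - N') * sInf (AFset n mt N') :=
            AFinf_cons mt n N' (N - N') hc1 (le_trans hc2 (Nat.sub_le _ _)) hne'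
        _ ≤ (mt + 1 - d) * sInf (AFset n mt N') := Nat.mul_le_mul_right _ hc2
        _ ≤ (mt + 1 - d) * T.card := Nat.mul_le_mul_left _ hIH
        _ ≤ big.card := by rw [mul_comm]; exact hbigcard

/-- Theorem 2 (counting consequence of the existence theorem), polynomial
form.  If `f` is a nonzero polynomial in `n` variables over a field `F` whose
degree in every variable is at most `m_t`, and `S ⊆ F` has `|S| = m_t + 1`,
then the number of points of the uniform grid `S^n` at which `f` is nonzero is
at least `𝔪(m_t+1, …, m_t+1; n(m_t+1) - deg f)`, the minimum of `∏ y i` over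
integer tuples with `1 ≤ y i ≤ m_t + 1` and `∑ y i = n(m_t+1) - deg f`. -/
theorem counting_from_existence
    {F : Type*} [Field F] (n mt : ℕ) (hn : 1 ≤ n) (hmt : 1 ≤ mt)
    (S : Finset F) (hS : S.card = mt + 1)
    (f : MvPolynomial (Fin n) F) (hf : f ≠ 0)
    (hdeg : ∀ i, f.degreeOf i ≤ mt) :
    sInf {p : ℕ | ∃ y : Fin n → ℕ, (∀ i, 1 ≤ y i ∧ y i ≤ mt + 1) ∧
        (∑ i, y i) = n * (mt + 1) - f.totalDegree ∧ p = ∏ i, y i}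
      ≤ {x : Fin n → F | (∀ i, x i ∈ S) ∧
          MvPolynomial.eval x f ≠ 0}.ncard := by
  have hset : {x : Fin n → F | (∀ i, x i ∈ S) ∧ MvPolynomial.eval x f ≠ 0}
      = ↑((Fintype.piFinset fun _ : Fin n => S).filter fun x => eval x f ≠ 0) := by
    ext x
    simp [Fintype.mem_piFinset]
  rw [hset, Set.ncard_coe_finset]
  exact alon_furedi_s8 mt hmt n S hS f hf hdeg
end

section
/- Let γ ≥ 2 and κ ≥ 2 be integers, let m_t ≥ (γ−1)(κ−1) be an integer, and let S ⊆ ℤ be a finite set with |S| = m_t + 1. Set D_4 = (γ(γ−1)/2)·(κ(κ−1)/2) and write D_4 = q·m_t + r with q ≥ 0 an integer and 0 ≤ r < m_t. Then the number of functions P : {0,…,γ−1} × {0,…,κ−1} → S such that for all i1 ≠ i2 in {0,…,γ−1} and all j1 ≠ j2 in {0,…,κ−1}, P(i1,j1) + P(i2,j2) ≠ P(i1,j2) + P(i2,j1), is at least (m_t+1)^{γκ−q} if r = 0, and at least (m_t+1−r)·(m_t+1)^{γκ−q−1} if r > 0. -/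
lemma key_quad (M r t : ℕ) (ht : t ≤ r) (hr : r < M) :
    (M - r) * M ≤ (M - t) * (M - (r - t)) := by
  obtain ⟨u, hu⟩ : ∃ u, M = r + u + 1 := ⟨M - r - 1, by omega⟩
  obtain ⟨a, ha⟩ : ∃ a, r = t + a := ⟨r - t, by omega⟩
  have h1 : M - r = u + 1 := by omega
  have h2 : M - t = u + 1 + a := by omega
  have h3 : M - (r - t) = u + 1 + t := by omega
  rw [h1, h2, h3, hu]
  nlinarith

lemma key_quad2 (mt r t : ℕ) (hrT : r < t) (hT : t ≤ mt) :
    (mt + 1 - r) ≤ (mt + 1 - t) * (mt + 1 - (mt + r - t)) := by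
  obtain ⟨a, ha⟩ : ∃ a, t = r + a + 1 := ⟨t - r - 1, by omega⟩
  obtain ⟨b, hb⟩ : ∃ b, mt = t + b := ⟨mt - t, by omega⟩
  have h1 : mt + 1 - r = a + b + 2 := by omega
  have h2 : mt + 1 - t = b + 1 := by omega
  have h3 : mt + 1 - (mt + r - t) = a + 2 := by omega
  rw [h1, h2, h3]
  nlinarith

lemma combine1 (mt n q r T : ℕ) (hT : T ≤ r) (hr : r < mt) :
    (if r = 0 then (mt+1)^(n+1-q) else (mt+1-r)*(mt+1)^(n+1-q-1))
    ≤ (mt+1-T) * (if r - T = 0 then (mt+1)^(n-q) else (mt+1-(r-T))*(mt+1)^(n-q-1)) := by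
  have hM : 1 ≤ mt + 1 := by omega
  rcases Nat.eq_zero_or_pos r with h0 | h0
  · have hT0 : T = 0 := by omega
    rw [h0, hT0]
    simp only [if_pos rfl, Nat.sub_zero, if_pos rfl]
    calc (mt+1)^(n+1-q) ≤ (mt+1)^(n-q+1) :=
          Nat.pow_le_pow_right hM (by omega)
      _ = (mt+1) * (mt+1)^(n-q) := by ring
  · by_cases hc : r - T = 0
    · have hTr : T = r := by omega
      rw [hTr]
      simp only [if_neg (by omega : ¬ r = 0), Nat.sub_self, if_pos rfl]
      exact Nat.mul_le_mul_left _ (Nat.pow_le_pow_right hM (by omega))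
    · simp only [if_neg (by omega : ¬ r = 0), if_neg hc]
      calc (mt+1-r)*(mt+1)^(n+1-q-1)
          ≤ (mt+1-r)*(mt+1)^(n-q-1+1) :=
            Nat.mul_le_mul_left _ (Nat.pow_le_pow_right hM (by omega))
        _ = ((mt+1-r)*(mt+1))*(mt+1)^(n-q-1) := by ring
        _ ≤ ((mt+1-T)*(mt+1-(r-T)))*(mt+1)^(n-q-1) :=
            Nat.mul_le_mul_right _ (key_quad (mt+1) r T (by omega) (by omega))
        _ = (mt+1-T)*((mt+1-(r-T))*(mt+1)^(n-q-1)) := by ring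

lemma combine2 (mt n q' r T : ℕ) (hrT : r < T) (hT : T ≤ mt) :
    (if r = 0 then (mt+1)^(n+1-(q'+1)) else (mt+1-r)*(mt+1)^(n+1-(q'+1)-1))
    ≤ (mt+1-T) * (if mt + r - T = 0 then (mt+1)^(n-q')
        else (mt+1-(mt+r-T))*(mt+1)^(n-q'-1)) := by
  have hM : 1 ≤ mt + 1 := by omega
  rcases Nat.eq_zero_or_pos (mt + r - T) with h0 | h0
  · have hr0 : r = 0 := by omega
    have h1 : mt + 1 - T = 1 := by omega
    subst hr0
    rw [h1]
    simp only [if_pos rfl, Nat.add_zero, one_mul]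
    rw [if_pos (show mt - T = 0 by omega)]
    exact Nat.pow_le_pow_right hM (by omega)
  · rcases Nat.eq_zero_or_pos r with hr0 | hr0
    · rw [hr0]
      simp only [if_pos rfl, if_neg (by omega : ¬ mt + 0 - T = 0)]
      calc (mt+1)^(n+1-(q'+1))
          ≤ (mt+1)^(n-q'-1+1) := Nat.pow_le_pow_right hM (by omega)
        _ = (mt+1) * (mt+1)^(n-q'-1) := by ring
        _ ≤ ((mt+1-T)*(mt+1-(mt+0-T))) * (mt+1)^(n-q'-1) := by
            refine Nat.mul_le_mul_right _ ?_
            have := key_quad2 mt 0 T (by omega) hT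
            simpa using this
        _ = (mt+1-T)*((mt+1-(mt+0-T))*(mt+1)^(n-q'-1)) := by ring
    · simp only [if_neg (by omega : ¬ r = 0), if_neg (by omega : ¬ mt + r - T = 0)]
      calc (mt+1-r)*(mt+1)^(n+1-(q'+1)-1)
          ≤ (mt+1-r)*(mt+1)^(n-q'-1) :=
            Nat.mul_le_mul_left _ (Nat.pow_le_pow_right hM (by omega))
        _ ≤ ((mt+1-T)*(mt+1-(mt+r-T)))*(mt+1)^(n-q'-1) :=
            Nat.mul_le_mul_right _ (key_quad2 mt r T hrT hT)
        _ = (mt+1-T)*((mt+1-(mt+r-T))*(mt+1)^(n-q'-1)) := by ring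

lemma bound_le_prod (mt : ℕ) :
    ∀ (n : ℕ) (t : ℕ → ℕ), (∀ k < n, t k ≤ mt) →
    ∀ q r : ℕ, r < mt → (∑ k ∈ Finset.range n, t k) = q * mt + r →
    (if r = 0 then (mt+1)^(n-q) else (mt+1-r)*(mt+1)^(n-q-1))
      ≤ ∏ k ∈ Finset.range n, (mt + 1 - t k) := by
  intro n
  induction n with
  | zero =>
    intro t ht q r hr hsum
    simp only [Finset.sum_range_zero] at hsum
    have hq : q = 0 := by
      rcases Nat.eq_zero_or_pos q with h | h
      · exact h
      · nlinarith
    have hr0 : r = 0 := by omega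
    subst hq; subst hr0
    simp
  | succ n ih =>
    intro t ht q r hr hsum
    rw [Finset.sum_range_succ] at hsum
    rw [Finset.prod_range_succ]
    have htn : t n ≤ mt := ht n (by omega)
    rcases le_or_gt (t n) r with hc | hc
    · have hsum' : (∑ k ∈ Finset.range n, t k) = q * mt + (r - t n) := by omega
      have IH := ih t (fun k hk => ht k (by omega)) q (r - t n) (by omega) hsum'
      calc (if r = 0 then (mt+1)^(n+1-q) else (mt+1-r)*(mt+1)^(n+1-q-1))
          ≤ (mt+1-(t n)) * (if r - t n = 0 then (mt+1)^(n-q)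
              else (mt+1-(r-(t n)))*(mt+1)^(n-q-1)) := combine1 mt n q r (t n) hc hr
        _ ≤ (mt+1-(t n)) * ∏ k ∈ Finset.range n, (mt + 1 - t k) :=
            Nat.mul_le_mul_left _ IH
        _ = (∏ k ∈ Finset.range n, (mt + 1 - t k)) * (mt+1-(t n)) := by ring
    · obtain ⟨q', rfl⟩ : ∃ q', q = q' + 1 := by
        rcases Nat.eq_zero_or_pos q with h | h
        · exfalso; subst h; simp at hsum; omega
        · exact ⟨q - 1, by omega⟩
      have hsum' : (∑ k ∈ Finset.range n, t k) = q' * mt + (mt + r - t n) := by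
        have : (q' + 1) * mt = q' * mt + mt := by ring
        omega
      have IH := ih t (fun k hk => ht k (by omega)) q' (mt + r - t n) (by omega) hsum'
      calc (if r = 0 then (mt+1)^(n+1-(q'+1)) else (mt+1-r)*(mt+1)^(n+1-(q'+1)-1))
          ≤ (mt+1-(t n)) * (if mt + r - t n = 0 then (mt+1)^(n-q')
              else (mt+1-(mt+r-(t n)))*(mt+1)^(n-q'-1)) := combine2 mt n q' r (t n) hc htn
        _ ≤ (mt+1-(t n)) * ∏ k ∈ Finset.range n, (mt + 1 - t k) :=
            Nat.mul_le_mul_left _ IH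
        _ = (∏ k ∈ Finset.range n, (mt + 1 - t k)) * (mt+1-(t n)) := by ring

def goodP (γ κ k : ℕ) (P : Fin γ → Fin κ → ℤ) : Prop :=
  ∀ i1 i2 : Fin γ, ∀ j1 j2 : Fin κ, i1 ≠ i2 → j1 ≠ j2 →
    (i1:ℕ)*κ+(j1:ℕ) < k → (i2:ℕ)*κ+(j2:ℕ) < k → (i1:ℕ)*κ+(j2:ℕ) < k →
    (i2:ℕ)*κ+(j1:ℕ) < k → P i1 j1 + P i2 j2 ≠ P i1 j2 + P i2 j1

instance (γ κ k : ℕ) : DecidablePred (goodP γ κ k) := by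
  unfold goodP; infer_instance

def Fk (γ κ : ℕ) (S : Finset ℤ) (k : ℕ) : Finset (Fin γ → Fin κ → ℤ) :=
  (Fintype.piFinset fun i : Fin γ => Fintype.piFinset fun j : Fin κ =>
     if (i:ℕ)*κ + (j:ℕ) < k then S else {0}).filter (goodP γ κ k)

lemma mem_Fk {γ κ k : ℕ} {S : Finset ℤ} {P : Fin γ → Fin κ → ℤ} :
    P ∈ Fk γ κ S k ↔
      (∀ (i : Fin γ) (j : Fin κ), (i:ℕ)*κ+(j:ℕ) < k → P i j ∈ S) ∧
      (∀ (i : Fin γ) (j : Fin κ), k ≤ (i:ℕ)*κ+(j:ℕ) → P i j = 0) ∧ goodP γ κ k P := by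
  simp only [Fk, Finset.mem_filter, Fintype.mem_piFinset]
  constructor
  · rintro ⟨h1, h2⟩
    refine ⟨fun i j hij => ?_, fun i j hij => ?_, h2⟩
    · have := h1 i j; rwa [if_pos hij] at this
    · have := h1 i j; rw [if_neg (by omega)] at this; simpa using this
  · rintro ⟨h1, h2, h3⟩
    refine ⟨fun i j => ?_, h3⟩
    by_cases hij : (i:ℕ)*κ+(j:ℕ) < k
    · rw [if_pos hij]; exact h1 i j hij
    · rw [if_neg hij]; simp [h2 i j (by omega)]

lemma idx_inj {γ κ : ℕ} {i i' : Fin γ} {j j' : Fin κ}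
    (h : (i:ℕ)*κ + (j:ℕ) = (i':ℕ)*κ + (j':ℕ)) : i = i' ∧ j = j' := by
  have hj : (j:ℕ) = (j':ℕ) := by
    have h1 : ((i:ℕ)*κ + (j:ℕ)) % κ = (j:ℕ) := by
      rw [Nat.add_comm, Nat.add_mul_mod_self_right, Nat.mod_eq_of_lt j.isLt]
    have h2 : ((i':ℕ)*κ + (j':ℕ)) % κ = (j':ℕ) := by
      rw [Nat.add_comm, Nat.add_mul_mod_self_right, Nat.mod_eq_of_lt j'.isLt]
    rw [← h1, ← h2, h]
  have hi : (i:ℕ) = (i':ℕ) := by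
    have hκ : 0 < κ := j.pos
    have : (i:ℕ)*κ = (i':ℕ)*κ := by omega
    exact Nat.eq_of_mul_eq_mul_right hκ this
  exact ⟨Fin.ext hi, Fin.ext hj⟩

lemma Fk_zero (γ κ : ℕ) (S : Finset ℤ) : (Fk γ κ S 0).card = 1 := by
  have : Fk γ κ S 0 = {fun _ _ => 0} := by
    ext P
    rw [mem_Fk, Finset.mem_singleton]
    constructor
    · rintro ⟨-, h2, -⟩
      funext i j
      exact h2 i j (Nat.zero_le _)
    · rintro rfl
      exact ⟨fun i j h => by omega, fun i j h => rfl, fun _ _ _ _ _ _ h => by omega⟩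
  rw [this, Finset.card_singleton]

def upd {γ κ : ℕ} (i₀ : Fin γ) (j₀ : Fin κ) (Q : Fin γ → Fin κ → ℤ) (v : ℤ) :
    Fin γ → Fin κ → ℤ :=
  fun i j => if i = i₀ ∧ j = j₀ then v else Q i j

lemma upd_self {γ κ : ℕ} (i₀ : Fin γ) (j₀ : Fin κ) (Q : Fin γ → Fin κ → ℤ) (v : ℤ) :
    upd i₀ j₀ Q v i₀ j₀ = v := if_pos ⟨rfl, rfl⟩

lemma upd_ne {γ κ : ℕ} (i₀ : Fin γ) (j₀ : Fin κ) (Q : Fin γ → Fin κ → ℤ) (v : ℤ)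
    {i : Fin γ} {j : Fin κ} (h : ¬(i = i₀ ∧ j = j₀)) :
    upd i₀ j₀ Q v i j = Q i j := if_neg h

lemma lt_of_idx_le_left {γ κ : ℕ} {i i' : Fin γ} {j : Fin κ} (hne : i ≠ i')
    (h : (i:ℕ)*κ + (j:ℕ) ≤ (i':ℕ)*κ + (j:ℕ)) : (i:ℕ) < (i':ℕ) := by
  have hκ0 : 0 < κ := j.pos
  have h1 : (i:ℕ)*κ ≤ (i':ℕ)*κ := by omega
  have h2 : (i:ℕ) ≤ (i':ℕ) := Nat.le_of_mul_le_mul_right h1 hκ0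
  have h3 : (i:ℕ) ≠ (i':ℕ) := fun h => hne (Fin.ext h)
  omega

lemma idx_lt {γ κ : ℕ} (i : Fin γ) (j : Fin κ) : (i:ℕ)*κ + (j:ℕ) < γ*κ := by
  calc (i:ℕ)*κ + (j:ℕ) < (i:ℕ)*κ + κ := by omega
    _ = ((i:ℕ)+1)*κ := by ring
    _ ≤ γ*κ := Nat.mul_le_mul_right κ i.isLt

lemma Fk_step (γ κ mt : ℕ) (hγ : 2 ≤ γ) (hκ : 2 ≤ κ) (S : Finset ℤ)
    (hS : S.card = mt+1) (k : ℕ) (hk : k < γ*κ) :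
    (mt + 1 - (k / κ) * (k % κ)) * (Fk γ κ S k).card ≤ (Fk γ κ S (k+1)).card := by
  classical
  have hκ0 : 0 < κ := by omega
  have hγ0 : 0 < γ := by omega
  obtain ⟨i₀, hvi⟩ : ∃ i₀ : Fin γ, (i₀:ℕ) = k / κ :=
    ⟨⟨k / κ, by rw [Nat.div_lt_iff_lt_mul hκ0]; omega⟩, rfl⟩
  obtain ⟨j₀, hvj⟩ : ∃ j₀ : Fin κ, (j₀:ℕ) = k % κ :=
    ⟨⟨k % κ, Nat.mod_lt _ hκ0⟩, rfl⟩
  have hidx : (i₀:ℕ)*κ + (j₀:ℕ) = k := by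
    rw [hvi, hvj, Nat.mul_comm]; exact Nat.div_add_mod k κ
  have hcell : ∀ (i : Fin γ) (j : Fin κ), (i:ℕ)*κ+(j:ℕ) = k → i = i₀ ∧ j = j₀ :=
    fun i j hc => idx_inj (hc.trans hidx.symm)
  have hmaps : ∀ P ∈ Fk γ κ S (k+1), upd i₀ j₀ P 0 ∈ Fk γ κ S k := by
    intro P hP
    rw [mem_Fk] at hP ⊢
    obtain ⟨h1, h2, h3⟩ := hP
    refine ⟨?_, ?_, ?_⟩
    · intro i j hij
      have hne : ¬(i = i₀ ∧ j = j₀) := by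
        rintro ⟨rfl, rfl⟩; omega
      rw [upd_ne _ _ _ _ hne]
      exact h1 i j (by omega)
    · intro i j hij
      by_cases he : i = i₀ ∧ j = j₀
      · obtain ⟨rfl, rfl⟩ := he
        exact upd_self _ _ _ _
      · rw [upd_ne _ _ _ _ he]
        apply h2
        have : (i:ℕ)*κ+(j:ℕ) ≠ k := fun hc => he (hcell i j hc)
        omega
    · intro i1 i2 j1 j2 hne1 hne2 ha hb hc hd
      have nc : ∀ (i : Fin γ) (j : Fin κ), (i:ℕ)*κ+(j:ℕ) < k → ¬(i = i₀ ∧ j = j₀) := by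
        rintro i j hij ⟨rfl, rfl⟩; omega
      rw [upd_ne _ _ _ _ (nc _ _ ha), upd_ne _ _ _ _ (nc _ _ hb),
        upd_ne _ _ _ _ (nc _ _ hc), upd_ne _ _ _ _ (nc _ _ hd)]
      exact h3 i1 i2 j1 j2 hne1 hne2 (by omega) (by omega) (by omega) (by omega)
  rw [Finset.card_eq_sum_card_fiberwise hmaps]
  have hfib : ∀ Q ∈ Fk γ κ S k,
      mt + 1 - (k / κ) * (k % κ) ≤
        ((Fk γ κ S (k+1)).filter (fun P => upd i₀ j₀ P 0 = Q)).card := by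
    intro Q hQ
    rw [mem_Fk] at hQ
    obtain ⟨q1, q2, q3⟩ := hQ
    have hQ0 : Q i₀ j₀ = 0 := q2 i₀ j₀ (by omega)
    have hDom : (Finset.univ.filter
        (fun p : Fin γ × Fin κ => (p.1:ℕ) < (i₀:ℕ) ∧ (p.2:ℕ) < (j₀:ℕ))).card
        ≤ (i₀:ℕ) * (j₀:ℕ) := by
      have h := Finset.card_le_card_of_injOn
        (s := Finset.univ.filter
          (fun p : Fin γ × Fin κ => (p.1:ℕ) < (i₀:ℕ) ∧ (p.2:ℕ) < (j₀:ℕ)))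
        (t := Finset.range (i₀:ℕ) ×ˢ Finset.range (j₀:ℕ))
        (fun p : Fin γ × Fin κ => ((p.1:ℕ), (p.2:ℕ))) ?_ ?_
      · simpa [Finset.card_product] using h
      · intro p hp
        rw [Finset.mem_coe, Finset.mem_filter] at hp
        simp [Finset.mem_product, hp.2.1, hp.2.2]
      · intro p _ p' _ h
        simp only [Prod.mk.injEq] at h
        exact Prod.ext (Fin.ext h.1) (Fin.ext h.2)
    have hForb : ((Finset.univ.filter
        (fun p : Fin γ × Fin κ => (p.1:ℕ) < (i₀:ℕ) ∧ (p.2:ℕ) < (j₀:ℕ))).image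
          (fun p => Q i₀ p.2 + Q p.1 j₀ - Q p.1 p.2)).card ≤ (i₀:ℕ) * (j₀:ℕ) :=
      le_trans Finset.card_image_le hDom
    set Forb : Finset ℤ := (Finset.univ.filter
        (fun p : Fin γ × Fin κ => (p.1:ℕ) < (i₀:ℕ) ∧ (p.2:ℕ) < (j₀:ℕ))).image
          (fun p => Q i₀ p.2 + Q p.1 j₀ - Q p.1 p.2) with hForbdef
    have key : ∀ v, v ∉ Forb → ∀ (i' : Fin γ) (j' : Fin κ),
        (i':ℕ) < (i₀:ℕ) → (j':ℕ) < (j₀:ℕ) →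
        v + Q i' j' ≠ Q i₀ j' + Q i' j₀ := by
      intro v hv i' j' hi hj heq
      apply hv
      rw [hForbdef, Finset.mem_image]
      refine ⟨(i', j'), ?_, by linarith⟩
      rw [Finset.mem_filter]
      exact ⟨Finset.mem_univ _, hi, hj⟩
    have hg1 : ∀ v ∈ S \ Forb,
        upd i₀ j₀ Q v ∈ (Fk γ κ S (k+1)).filter (fun P => upd i₀ j₀ P 0 = Q) := by
      intro v hv
      rw [Finset.mem_sdiff] at hv
      obtain ⟨hvS, hvF⟩ := hv
      rw [Finset.mem_filter, mem_Fk]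
      refine ⟨⟨?_, ?_, ?_⟩, ?_⟩
      · intro i j hij
        by_cases he : i = i₀ ∧ j = j₀
        · obtain ⟨rfl, rfl⟩ := he
          rw [upd_self]; exact hvS
        · rw [upd_ne _ _ _ _ he]
          apply q1
          have : (i:ℕ)*κ+(j:ℕ) ≠ k := fun hc => he (hcell i j hc)
          omega
      · intro i j hij
        have he : ¬(i = i₀ ∧ j = j₀) := by rintro ⟨rfl, rfl⟩; omega
        rw [upd_ne _ _ _ _ he]
        exact q2 i j (by omega)
      · intro i1 i2 j1 j2 hne1 hne2 ha hb hc hd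
        by_cases hA : (i1 = i₀ ∨ i2 = i₀) ∧ (j1 = j₀ ∨ j2 = j₀)
        · obtain ⟨hi | hi, hj | hj⟩ := hA
          · -- i1 = i₀, j1 = j₀
            subst i1; subst j1
            have hi2 : (i2:ℕ) < (i₀:ℕ) :=
              lt_of_idx_le_left (j := j₀) (Ne.symm hne1) (by omega)
            have hj2 : (j2:ℕ) < (j₀:ℕ) := by
              have h5 : (j2:ℕ) ≠ (j₀:ℕ) := fun h => hne2.symm (Fin.ext h)
              omega
            have n1 : ¬(i2 = i₀ ∧ j2 = j₀) := fun h => hne1 h.1.symm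
            have n2 : ¬(i₀ = i₀ ∧ j2 = j₀) := fun h => hne2 h.2.symm
            have n3 : ¬(i2 = i₀ ∧ j₀ = j₀) := fun h => hne1 h.1.symm
            rw [upd_self, upd_ne _ _ _ _ n1, upd_ne _ _ _ _ n2, upd_ne _ _ _ _ n3]
            have hk2 := key v hvF i2 j2 hi2 hj2
            intro hcon; apply hk2; linarith
          · -- i1 = i₀, j2 = j₀
            subst i1; subst j2
            have hi2 : (i2:ℕ) < (i₀:ℕ) :=
              lt_of_idx_le_left (j := j₀) (Ne.symm hne1) (by omega)
            have hj1 : (j1:ℕ) < (j₀:ℕ) := by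
              have h5 : (j1:ℕ) ≠ (j₀:ℕ) := fun h => hne2 (Fin.ext h)
              omega
            have n1 : ¬(i₀ = i₀ ∧ j1 = j₀) := fun h => hne2 h.2
            have n2 : ¬(i2 = i₀ ∧ j₀ = j₀) := fun h => hne1 h.1.symm
            have n3 : ¬(i2 = i₀ ∧ j1 = j₀) := fun h => hne1 h.1.symm
            rw [upd_self, upd_ne _ _ _ _ n1, upd_ne _ _ _ _ n2, upd_ne _ _ _ _ n3]
            have hk2 := key v hvF i2 j1 hi2 hj1
            intro hcon; apply hk2; linarith
          · -- i2 = i₀, j1 = j₀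
            subst i2; subst j1
            have hi1 : (i1:ℕ) < (i₀:ℕ) :=
              lt_of_idx_le_left (j := j₀) hne1 (by omega)
            have hj2 : (j2:ℕ) < (j₀:ℕ) := by
              have h5 : (j2:ℕ) ≠ (j₀:ℕ) := fun h => hne2.symm (Fin.ext h)
              omega
            have n1 : ¬(i1 = i₀ ∧ j₀ = j₀) := fun h => hne1 h.1
            have n2 : ¬(i₀ = i₀ ∧ j2 = j₀) := fun h => hne2 h.2.symm
            have n3 : ¬(i1 = i₀ ∧ j2 = j₀) := fun h => hne1 h.1
            rw [upd_self, upd_ne _ _ _ _ n1, upd_ne _ _ _ _ n2, upd_ne _ _ _ _ n3]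
            have hk2 := key v hvF i1 j2 hi1 hj2
            intro hcon; apply hk2; linarith
          · -- i2 = i₀, j2 = j₀
            subst i2; subst j2
            have hi1 : (i1:ℕ) < (i₀:ℕ) :=
              lt_of_idx_le_left (j := j₀) hne1 (by omega)
            have hj1 : (j1:ℕ) < (j₀:ℕ) := by
              have h5 : (j1:ℕ) ≠ (j₀:ℕ) := fun h => hne2 (Fin.ext h)
              omega
            have n1 : ¬(i1 = i₀ ∧ j1 = j₀) := fun h => hne1 h.1
            have n2 : ¬(i1 = i₀ ∧ j₀ = j₀) := fun h => hne1 h.1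
            have n3 : ¬(i₀ = i₀ ∧ j1 = j₀) := fun h => hne2 h.2
            rw [upd_self, upd_ne _ _ _ _ n1, upd_ne _ _ _ _ n2, upd_ne _ _ _ _ n3]
            have hk2 := key v hvF i1 j1 hi1 hj1
            intro hcon; apply hk2; linarith
        · have hA' : (¬ i1 = i₀ ∧ ¬ i2 = i₀) ∨ (¬ j1 = j₀ ∧ ¬ j2 = j₀) := by
            tauto
          have nc : ∀ (i : Fin γ) (j : Fin κ), (i = i1 ∨ i = i2) →
              (j = j1 ∨ j = j2) → ¬(i = i₀ ∧ j = j₀) := by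
            rintro i j hi hj ⟨rfl, rfl⟩
            rcases hA' with ⟨u1, u2⟩ | ⟨u1, u2⟩
            · rcases hi with rfl | rfl
              · exact u1 rfl
              · exact u2 rfl
            · rcases hj with rfl | rfl
              · exact u1 rfl
              · exact u2 rfl
          have hlt : ∀ (i : Fin γ) (j : Fin κ), (i:ℕ)*κ+(j:ℕ) < k + 1 →
              ¬(i = i₀ ∧ j = j₀) → (i:ℕ)*κ+(j:ℕ) < k := by
            intro i j h hn
            have : (i:ℕ)*κ+(j:ℕ) ≠ k := fun hc => hn (hcell i j hc)
            omega
          rw [upd_ne _ _ _ _ (nc i1 j1 (Or.inl rfl) (Or.inl rfl)),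
            upd_ne _ _ _ _ (nc i2 j2 (Or.inr rfl) (Or.inr rfl)),
            upd_ne _ _ _ _ (nc i1 j2 (Or.inl rfl) (Or.inr rfl)),
            upd_ne _ _ _ _ (nc i2 j1 (Or.inr rfl) (Or.inl rfl))]
          exact q3 i1 i2 j1 j2 hne1 hne2
            (hlt _ _ ha (nc i1 j1 (Or.inl rfl) (Or.inl rfl)))
            (hlt _ _ hb (nc i2 j2 (Or.inr rfl) (Or.inr rfl)))
            (hlt _ _ hc (nc i1 j2 (Or.inl rfl) (Or.inr rfl)))
            (hlt _ _ hd (nc i2 j1 (Or.inr rfl) (Or.inl rfl)))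
      · -- upd i₀ j₀ (upd i₀ j₀ Q v) 0 = Q
        funext i j
        by_cases he : i = i₀ ∧ j = j₀
        · obtain ⟨rfl, rfl⟩ := he
          rw [upd_self, hQ0]
        · rw [upd_ne _ _ _ _ he, upd_ne _ _ _ _ he]
    have hginj : Set.InjOn (upd i₀ j₀ Q) ↑(S \ Forb) := by
      intro a _ b _ h
      have h2 := congrFun (congrFun h i₀) j₀
      rwa [upd_self, upd_self] at h2
    have h5 : (S \ Forb).card ≤
        ((Fk γ κ S (k+1)).filter (fun P => upd i₀ j₀ P 0 = Q)).card :=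
      Finset.card_le_card_of_injOn _ hg1 hginj
    have h6 : mt + 1 - (k / κ) * (k % κ) ≤ (S \ Forb).card := by
      have h7 := Finset.le_card_sdiff Forb S
      rw [hS] at h7
      have h8 : Forb.card ≤ (k / κ) * (k % κ) := by
        rw [hForbdef]
        rwa [hvi, hvj] at hForb
      omega
    omega
  calc (mt + 1 - (k / κ) * (k % κ)) * (Fk γ κ S k).card
      = ∑ _Q ∈ Fk γ κ S k, (mt + 1 - (k / κ) * (k % κ)) := by
        rw [Finset.sum_const, smul_eq_mul, Nat.mul_comm]
    _ ≤ ∑ Q ∈ Fk γ κ S k,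
        ((Fk γ κ S (k+1)).filter (fun P => upd i₀ j₀ P 0 = Q)).card :=
        Finset.sum_le_sum hfib

lemma Fk_chain (γ κ mt : ℕ) (hγ : 2 ≤ γ) (hκ : 2 ≤ κ) (S : Finset ℤ)
    (hS : S.card = mt+1) :
    ∀ k, k ≤ γ*κ →
    (∏ j ∈ Finset.range k, (mt + 1 - (j/κ)*(j%κ))) ≤ (Fk γ κ S k).card := by
  intro k
  induction k with
  | zero => intro _; simp [Fk_zero]
  | succ k ih =>
    intro hk1
    have hk : k < γ*κ := by omega
    rw [Finset.prod_range_succ]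
    calc (∏ j ∈ Finset.range k, (mt + 1 - (j/κ)*(j%κ))) * (mt + 1 - (k/κ)*(k%κ))
        ≤ (Fk γ κ S k).card * (mt + 1 - (k/κ)*(k%κ)) :=
          Nat.mul_le_mul_right _ (ih (by omega))
      _ = (mt + 1 - (k/κ)*(k%κ)) * (Fk γ κ S k).card := Nat.mul_comm _ _
      _ ≤ (Fk γ κ S (k+1)).card := Fk_step γ κ mt hγ hκ S hS k hk

lemma sum_idx (γ κ : ℕ) (hκ0 : 0 < κ) :
    ∑ k ∈ Finset.range (γ*κ), (k/κ)*(k%κ) = (γ*(γ-1)/2) * (κ*(κ-1)/2) := by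
  have h1 : (γ*(γ-1)/2) * (κ*(κ-1)/2)
      = ∑ p ∈ Finset.range γ ×ˢ Finset.range κ, p.1 * p.2 := by
    rw [Finset.sum_product, ← Finset.sum_mul_sum, Finset.sum_range_id,
      Finset.sum_range_id]
  rw [h1]
  apply Finset.sum_nbij' (i := fun k => (k / κ, k % κ))
    (j := fun p : ℕ × ℕ => p.1 * κ + p.2)
  · intro a ha
    rw [Finset.mem_range] at ha
    rw [Finset.mem_product, Finset.mem_range, Finset.mem_range]
    exact ⟨by rw [Nat.div_lt_iff_lt_mul hκ0]; omega, Nat.mod_lt _ hκ0⟩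
  · intro a ha
    rw [Finset.mem_product, Finset.mem_range, Finset.mem_range] at ha
    rw [Finset.mem_range]
    calc a.1 * κ + a.2 < a.1 * κ + κ := by omega
      _ = (a.1 + 1) * κ := by ring
      _ ≤ γ * κ := Nat.mul_le_mul_right κ (by omega)
  · intro a _
    simp only
    rw [Nat.mul_comm]
    exact Nat.div_add_mod a κ
  · intro a ha
    rw [Finset.mem_product, Finset.mem_range, Finset.mem_range] at ha
    have e1 : (a.1 * κ + a.2) / κ = a.1 := by
      rw [Nat.mul_comm a.1 κ, Nat.mul_add_div hκ0, Nat.div_eq_of_lt ha.2,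
        Nat.add_zero]
    have e2 : (a.1 * κ + a.2) % κ = a.2 := by
      rw [Nat.mul_comm a.1 κ, Nat.mul_add_mod, Nat.mod_eq_of_lt ha.2]
    simp [e1, e2]
  · intro a _
    rfl


/-- Corollary 4 (counting assignments eliminating all 4-cycles).  For the
fully connected `γ × κ` base graph, a value set `S ⊆ ℤ` with
`|S| = m_t + 1`, `m_t ≥ (γ-1)(κ-1)`, and `D₄ = C(γ,2)·C(κ,2) = q·m_t + r`
with `0 ≤ r < m_t`, the number of partition matrices `P` with values in `S`
destroying all 4-cycle candidates is at least `(m_t+1)^(γκ-q)` if `r = 0`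
and `(m_t+1-r)(m_t+1)^(γκ-q-1)` if `r > 0`. -/
theorem counting_four_cycle_free_assignments
    (γ κ mt : ℕ) (hγ : 2 ≤ γ) (hκ : 2 ≤ κ)
    (hmt : (γ - 1) * (κ - 1) ≤ mt)
    (S : Finset ℤ) (hS : S.card = mt + 1)
    (q r : ℕ)
    (hqr : (γ * (γ - 1) / 2) * (κ * (κ - 1) / 2) = q * mt + r)
    (hr : r < mt) :
    (if r = 0 then (mt + 1) ^ (γ * κ - q)
      else (mt + 1 - r) * (mt + 1) ^ (γ * κ - q - 1))
      ≤ {P : Fin γ → Fin κ → ℤ | (∀ i j, P i j ∈ S) ∧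
          ∀ i1 i2 : Fin γ, ∀ j1 j2 : Fin κ, i1 ≠ i2 → j1 ≠ j2 →
            P i1 j1 + P i2 j2 ≠ P i1 j2 + P i2 j1}.ncard := by
  classical
  have hκ0 : 0 < κ := by omega
  have hset : {P : Fin γ → Fin κ → ℤ | (∀ i j, P i j ∈ S) ∧
          ∀ i1 i2 : Fin γ, ∀ j1 j2 : Fin κ, i1 ≠ i2 → j1 ≠ j2 →
            P i1 j1 + P i2 j2 ≠ P i1 j2 + P i2 j1}
      = ↑(Fk γ κ S (γ*κ)) := by
    ext P
    simp only [Set.mem_setOf_eq, Finset.mem_coe, mem_Fk]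
    constructor
    · rintro ⟨h1, h2⟩
      refine ⟨fun i j _ => h1 i j, fun i j hij => absurd (idx_lt i j) (by omega), ?_⟩
      intro i1 i2 j1 j2 a b _ _ _ _
      exact h2 i1 i2 j1 j2 a b
    · rintro ⟨h1, h2, h3⟩
      exact ⟨fun i j => h1 i j (idx_lt i j),
        fun i1 i2 j1 j2 a b =>
          h3 i1 i2 j1 j2 a b (idx_lt _ _) (idx_lt _ _) (idx_lt _ _) (idx_lt _ _)⟩
  rw [hset, Set.ncard_coe_finset]
  refine le_trans ?_ (Fk_chain γ κ mt hγ hκ S hS (γ*κ) le_rfl)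
  have hsum : (∑ k ∈ Finset.range (γ*κ), (k/κ)*(k%κ)) = q * mt + r := by
    rw [sum_idx γ κ hκ0]; exact hqr
  refine bound_le_prod mt (γ*κ) (fun k => (k/κ)*(k%κ)) ?_ q r hr hsum
  intro k hk
  have h1 : k / κ ≤ γ - 1 := by
    have : k / κ < γ := by rw [Nat.div_lt_iff_lt_mul hκ0]; omega
    omega
  have h2 : k % κ ≤ κ - 1 := by
    have := Nat.mod_lt k hκ0; omega
  calc (k/κ)*(k%κ) ≤ (γ-1)*(κ-1) := Nat.mul_le_mul h1 h2
    _ ≤ mt := hmt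
end

section
/- The number of functions P : {0,1,2} × {0,1,2,3,4} → {0,1,…,8} such that for all i1 ≠ i2 in {0,1,2} and all j1 ≠ j2 in {0,1,2,3,4}, P(i1,j1) + P(i2,j2) ≠ P(i1,j2) + P(i2,j1), is at least 3 · 9^{11} = 94143178827. -/
open Finset



set_option maxHeartbeats 2000000 in
lemma greedy_count (α : Type) [Fintype α] [DecidableEq α] [Nonempty α] :
    ∀ (n : ℕ) (B : Fin n → (Fin n → α) → Finset α) (b : Fin n → ℕ),
      (∀ (k : Fin n) (f g : Fin n → α), (∀ k', k' < k → f k' = g k') → B k f = B k g) →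
      (∀ k f, (B k f).card ≤ b k) →
      ∏ k, (Fintype.card α - b k) ≤
        (Finset.univ.filter (fun f : Fin n → α => ∀ k, f k ∉ B k f)).card := by
  intro n
  induction n with
  | zero =>
      intro B b _ _
      simp only [Finset.univ_eq_empty, Finset.prod_empty]
      rw [Finset.filter_true_of_mem (fun f _ => fun k => k.elim0)]
      simp [Finset.card_univ]
  | succ n ih =>
      intro B b hdep hcard
      set x0 : α := Classical.arbitrary α with hx0
      set B' : Fin n → (Fin n → α) → Finset α :=
        fun j g => B j.castSucc (Fin.snoc g x0) with hB'
      have hdep' : ∀ (j : Fin n) (f g : Fin n → α),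
          (∀ k', k' < j → f k' = g k') → B' j f = B' j g := by
        intro j f g h
        apply hdep
        intro k' hk'
        have h1 : k'.val < j.val := by simpa [Fin.lt_def] using hk'
        have hk'n : k'.val < n := lt_trans h1 j.isLt
        have : k' = Fin.castSucc ⟨k'.val, hk'n⟩ := by apply Fin.ext; simp
        rw [this, Fin.snoc_castSucc, Fin.snoc_castSucc]
        exact h ⟨k'.val, hk'n⟩ (by simpa [Fin.lt_def] using h1)
      have hcard' : ∀ (j : Fin n) (g : Fin n → α), (B' j g).card ≤ b j.castSucc :=
        fun j g => hcard _ _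
      set C : (Fin n → α) → Finset α := fun g => B (Fin.last n) (Fin.snoc g x0) with hC
      -- key rewriting of snoc-dependence
      have hsnoc_dep : ∀ (g : Fin n → α) (a : α) (k : Fin (n+1)),
          B k (Fin.snoc g a) = B k (Fin.snoc g x0) ∨ k = Fin.last n := by
        intro g a k
        rcases eq_or_ne k (Fin.last n) with hk | hk
        · exact Or.inr hk
        · left
          apply hdep
          intro k' hk'
          have hkn : k.val < n + 1 := k.isLt
          have hklast : k.val ≠ n := fun h => hk (Fin.ext h)
          have h1 : k'.val < n := by
            have := Fin.lt_def.mp hk'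
            omega
          have hcast : k' = Fin.castSucc ⟨k'.val, h1⟩ := by apply Fin.ext; simp
          rw [hcast, Fin.snoc_castSucc, Fin.snoc_castSucc]
      have key : (Finset.univ.filter (fun f : Fin (n+1) → α => ∀ k, f k ∉ B k f)) =
          (Finset.univ.filter (fun g : Fin n → α => ∀ j, g j ∉ B' j g)).biUnion
            (fun g => (Finset.univ \ C g).image (fun a : α => Fin.snoc (α := fun _ => α) g a)) := by
        ext f
        simp only [Finset.mem_filter, Finset.mem_biUnion, Finset.mem_univ, true_and,
          Finset.mem_image, Finset.mem_sdiff]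
        constructor
        · intro hf
          refine ⟨Fin.init f, ?_, f (Fin.last n), ?_, Fin.snoc_init_self f⟩
          · intro j
            have heq : B' j (Fin.init f) = B j.castSucc f := by
              have : f = Fin.snoc (Fin.init f) (f (Fin.last n)) := (Fin.snoc_init_self f).symm
              rw [hB']
              conv_rhs => rw [this]
              rcases hsnoc_dep (Fin.init f) (f (Fin.last n)) j.castSucc with h | h
              · exact h.symm
              · exfalso
                have := congrArg Fin.val h
                simp [Fin.val_last] at this
                omega
            show Fin.init f j ∉ B' j (Fin.init f)
            rw [heq]
            have : Fin.init f j = f j.castSucc := rfl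
            rw [this]
            exact hf j.castSucc
          · show f (Fin.last n) ∉ C (Fin.init f)
            have heq : C (Fin.init f) = B (Fin.last n) f := by
              rw [hC]
              conv_rhs => rw [← Fin.snoc_init_self f]
              apply hdep
              intro k' hk'
              have h1 : k'.val < n := by simpa [Fin.lt_def, Fin.val_last] using hk'
              have hcast : k' = Fin.castSucc ⟨k'.val, h1⟩ := by apply Fin.ext; simp
              rw [hcast, Fin.snoc_castSucc, Fin.snoc_castSucc]
            rw [heq]
            exact hf (Fin.last n)
        · rintro ⟨g, hg, a, ha, rfl⟩
          intro k
          induction k using Fin.lastCases with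
          | last =>
              rw [Fin.snoc_last]
              have heq : B (Fin.last n) (Fin.snoc g a) = C g := by
                rw [hC]
                apply hdep
                intro k' hk'
                have h1 : k'.val < n := by simpa [Fin.lt_def, Fin.val_last] using hk'
                have hcast : k' = Fin.castSucc ⟨k'.val, h1⟩ := by apply Fin.ext; simp
                rw [hcast, Fin.snoc_castSucc, Fin.snoc_castSucc]
              rw [heq]; exact ha
          | cast j =>
              rw [Fin.snoc_castSucc]
              have heq : B j.castSucc (Fin.snoc g a) = B' j g := by
                rw [hB']
                rcases hsnoc_dep g a j.castSucc with h | h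
                · exact h
                · exfalso
                  have := congrArg Fin.val h
                  simp [Fin.val_last] at this
                  omega
              rw [heq]; exact hg j
      rw [key]
      rw [Finset.card_biUnion]
      · have hsnoc_inj : ∀ g : Fin n → α, Function.Injective (fun a : α => Fin.snoc (α := fun _ => α) g a) := by
          intro g a1 a2 h
          have := congrArg (fun f : Fin (n+1) → α => f (Fin.last n)) h
          simpa [Fin.snoc_last] using this
        calc ∏ k : Fin (n+1), (Fintype.card α - b k)
            = (∏ j : Fin n, (Fintype.card α - b j.castSucc)) *
                (Fintype.card α - b (Fin.last n)) := by
              rw [Fin.prod_univ_castSucc]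
          _ ≤ (Finset.univ.filter (fun g : Fin n → α => ∀ j, g j ∉ B' j g)).card *
                (Fintype.card α - b (Fin.last n)) := by
              apply Nat.mul_le_mul_right
              exact ih B' (fun j => b j.castSucc) hdep' hcard'
          _ = ∑ _g ∈ (Finset.univ.filter (fun g : Fin n → α => ∀ j, g j ∉ B' j g)),
                (Fintype.card α - b (Fin.last n)) := by
              rw [Finset.sum_const, smul_eq_mul]
          _ ≤ ∑ g ∈ (Finset.univ.filter (fun g : Fin n → α => ∀ j, g j ∉ B' j g)),
                ((Finset.univ \ C g).image (fun a : α => Fin.snoc (α := fun _ => α) g a)).card := by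
              apply Finset.sum_le_sum
              intro g _
              refine le_trans ?_ (Finset.card_image_of_injective _ (hsnoc_inj g)).ge
              rw [Finset.card_sdiff_of_subset (Finset.subset_univ _), Finset.card_univ]
              exact Nat.sub_le_sub_left (hcard _ _) _
      · -- pairwise disjoint
        intro g1 h1 g2 h2 hne
        apply Finset.disjoint_left.mpr
        rintro f hf1 hf2
        simp only [Finset.mem_image, Finset.mem_sdiff, Finset.mem_univ, true_and] at hf1 hf2
        obtain ⟨a1, -, rfl⟩ := hf1
        obtain ⟨a2, -, heq⟩ := hf2
        apply hne
        have := congrArg Fin.init heq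
        rw [Fin.init_snoc, Fin.init_snoc] at this
        exact this.symm


abbrev idx15 (i : Fin 3) (j : Fin 5) : Fin 15 := ⟨5 * i.val + j.val, by omega⟩
abbrev row15 (k : Fin 15) : Fin 3 := ⟨k.val / 5, by omega⟩
abbrev col15 (k : Fin 15) : Fin 5 := ⟨k.val % 5, by omega⟩

def Bex : Fin 15 → (Fin 15 → Fin 9) → Finset (Fin 9) := fun k f =>
  Finset.univ.filter (fun v => ∃ p : Fin 3 × Fin 5, p.1 < row15 k ∧ p.2 < col15 k ∧
    (v : ℕ) + (f (idx15 p.1 p.2) : ℕ) =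
      (f (idx15 p.1 (col15 k)) : ℕ) + (f (idx15 (row15 k) p.2) : ℕ))

def bex : Fin 15 → ℕ := fun k => (k.val / 5) * (k.val % 5)

lemma Bex_dep (k : Fin 15) (f g : Fin 15 → Fin 9)
    (h : ∀ k', k' < k → f k' = g k') : Bex k f = Bex k g := by
  have hidx : ∀ p : Fin 3 × Fin 5, p.1 < row15 k → p.2 < col15 k →
      f (idx15 p.1 p.2) = g (idx15 p.1 p.2) ∧
      f (idx15 p.1 (col15 k)) = g (idx15 p.1 (col15 k)) ∧
      f (idx15 (row15 k) p.2) = g (idx15 (row15 k) p.2) := by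
    intro p h1 h2
    have h1' : p.1.val < k.val / 5 := h1
    have h2' : p.2.val < k.val % 5 := h2
    refine ⟨h _ ?_, h _ ?_, h _ ?_⟩
    · show 5 * p.1.val + p.2.val < k.val; omega
    · show 5 * p.1.val + (k.val % 5) < k.val; omega
    · show 5 * (k.val / 5) + p.2.val < k.val; omega
  ext v
  simp only [Bex, Finset.mem_filter, Finset.mem_univ, true_and]
  constructor
  · rintro ⟨p, h1, h2, h3⟩
    obtain ⟨e1, e2, e3⟩ := hidx p h1 h2
    exact ⟨p, h1, h2, by rw [← e1, ← e2, ← e3]; exact h3⟩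
  · rintro ⟨p, h1, h2, h3⟩
    obtain ⟨e1, e2, e3⟩ := hidx p h1 h2
    exact ⟨p, h1, h2, by rw [e1, e2, e3]; exact h3⟩

lemma Bex_card (k : Fin 15) (f : Fin 15 → Fin 9) : (Bex k f).card ≤ bex k := by
  classical
  set pred : Fin 3 × Fin 5 → Fin 9 → Prop := fun p v =>
    p.1 < row15 k ∧ p.2 < col15 k ∧
    (v : ℕ) + (f (idx15 p.1 p.2) : ℕ) =
      (f (idx15 p.1 (col15 k)) : ℕ) + (f (idx15 (row15 k) p.2) : ℕ) with hpred
  set w : Fin 9 → Fin 3 × Fin 5 := fun v =>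
    if h : ∃ p : Fin 3 × Fin 5, pred p v then h.choose else default with hw
  have hspec : ∀ v ∈ Bex k f, pred (w v) v := by
    intro v hv
    simp only [Bex, Finset.mem_filter, Finset.mem_univ, true_and] at hv
    have hex : ∃ p : Fin 3 × Fin 5, pred p v := hv
    simp only [hw, dif_pos hex]
    exact hex.choose_spec
  have : (Bex k f).card ≤ ((Finset.Iio (row15 k)) ×ˢ (Finset.Iio (col15 k))).card := by
    apply Finset.card_le_card_of_injOn w
    · intro v hv
      obtain ⟨h1, h2, -⟩ := hspec v hv
      simp only [Finset.mem_coe, Finset.mem_product, Finset.mem_Iio]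
      exact ⟨h1, h2⟩
    · intro v1 hv1 v2 hv2 hw12
      obtain ⟨-, -, e1⟩ := hspec v1 hv1
      obtain ⟨-, -, e2⟩ := hspec v2 hv2
      rw [hw12] at e1
      have : (v1 : ℕ) = (v2 : ℕ) := by omega
      exact Fin.ext this
  rw [Finset.card_product, Fin.card_Iio, Fin.card_Iio] at this
  exact this

/-- Worked example (fully connected `3 × 5` base matrix): the number of
partition matrices `P : {0,1,2} × {0,1,2,3,4} → {0,…,8}` destroying all
4-cycle candidates is at least `3 · 9^11 = 94143178827`. -/
theorem counting_example_3x5 :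
    3 * 9 ^ 11 = 94143178827 ∧
    (94143178827 : ℕ) ≤
      {P : Fin 3 → Fin 5 → Fin 9 |
        ∀ i1 i2 : Fin 3, ∀ j1 j2 : Fin 5, i1 ≠ i2 → j1 ≠ j2 →
          (P i1 j1 : ℕ) + (P i2 j2 : ℕ) ≠
          (P i1 j2 : ℕ) + (P i2 j1 : ℕ)}.ncard := by
  refine ⟨by norm_num, ?_⟩
  have hrow : ∀ (i : Fin 3) (j : Fin 5), row15 (idx15 i j) = i := by
    intro i j
    apply Fin.ext
    show (5 * i.val + j.val) / 5 = i.val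
    omega
  have hcol : ∀ (i : Fin 3) (j : Fin 5), col15 (idx15 i j) = j := by
    intro i j
    apply Fin.ext
    show (5 * i.val + j.val) % 5 = j.val
    omega
  have hmaps : ∀ f : Fin 15 → Fin 9, (∀ k, f k ∉ Bex k f) →
      ∀ i1 i2 : Fin 3, ∀ j1 j2 : Fin 5, i1 ≠ i2 → j1 ≠ j2 →
        (f (idx15 i1 j1) : ℕ) + (f (idx15 i2 j2) : ℕ) ≠
        (f (idx15 i1 j2) : ℕ) + (f (idx15 i2 j1) : ℕ) := by
    intro f hf
    have hcan : ∀ i1 i2 : Fin 3, ∀ j1 j2 : Fin 5, i1 < i2 → j1 < j2 →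
        ¬((f (idx15 i2 j2) : ℕ) + (f (idx15 i1 j1) : ℕ) =
          (f (idx15 i1 j2) : ℕ) + (f (idx15 i2 j1) : ℕ)) := by
      intro i1 i2 j1 j2 hi hj hEq
      apply hf (idx15 i2 j2)
      simp only [Bex, Finset.mem_filter, Finset.mem_univ, true_and]
      refine ⟨(i1, j1), ?_, ?_, ?_⟩
      · show i1 < row15 (idx15 i2 j2)
        rw [hrow i2 j2]; exact hi
      · show j1 < col15 (idx15 i2 j2)
        rw [hcol i2 j2]; exact hj
      · show (f (idx15 i2 j2) : ℕ) + (f (idx15 i1 j1) : ℕ) =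
          (f (idx15 i1 (col15 (idx15 i2 j2))) : ℕ) +
          (f (idx15 (row15 (idx15 i2 j2)) j1) : ℕ)
        rw [hrow i2 j2, hcol i2 j2]
        exact hEq
    intro i1 i2 j1 j2 hi hj hEq
    have hi' : i1 < i2 ∨ i2 < i1 := lt_or_gt_of_ne hi
    have hj' : j1 < j2 ∨ j2 < j1 := lt_or_gt_of_ne hj
    rcases hi' with hi' | hi' <;> rcases hj' with hj' | hj'
    · exact hcan i1 i2 j1 j2 hi' hj' (by omega)
    · exact hcan i1 i2 j2 j1 hi' hj' (by omega)
    · exact hcan i2 i1 j1 j2 hi' hj' (by omega)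
    · exact hcan i2 i1 j2 j1 hi' hj' (by omega)
  have hinj : Function.Injective
      (fun (f : Fin 15 → Fin 9) (i : Fin 3) (j : Fin 5) => f (idx15 i j)) := by
    intro f1 f2 h
    funext k
    have h2 := congrFun (congrFun h (row15 k)) (col15 k)
    simp only at h2
    have hk : idx15 (row15 k) (col15 k) = k := by
      apply Fin.ext
      show 5 * (k.val / 5) + k.val % 5 = k.val
      omega
    rwa [hk] at h2
  have hchain : (Finset.univ.filter (fun f : Fin 15 → Fin 9 => ∀ k, f k ∉ Bex k f)).card ≤
      (Finset.univ.filter (fun P : Fin 3 → Fin 5 → Fin 9 =>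
        ∀ i1 i2 : Fin 3, ∀ j1 j2 : Fin 5, i1 ≠ i2 → j1 ≠ j2 →
          (P i1 j1 : ℕ) + (P i2 j2 : ℕ) ≠
          (P i1 j2 : ℕ) + (P i2 j1 : ℕ))).card := by
    apply Finset.card_le_card_of_injOn
      (fun (f : Fin 15 → Fin 9) (i : Fin 3) (j : Fin 5) => f (idx15 i j))
    · intro f hf
      simp only [Finset.mem_coe, Finset.mem_filter, Finset.mem_univ, true_and] at hf ⊢
      exact hmaps f hf
    · exact hinj.injOn
  have hncard : {P : Fin 3 → Fin 5 → Fin 9 |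
        ∀ i1 i2 : Fin 3, ∀ j1 j2 : Fin 5, i1 ≠ i2 → j1 ≠ j2 →
          (P i1 j1 : ℕ) + (P i2 j2 : ℕ) ≠
          (P i1 j2 : ℕ) + (P i2 j1 : ℕ)}.ncard =
      (Finset.univ.filter (fun P : Fin 3 → Fin 5 → Fin 9 =>
        ∀ i1 i2 : Fin 3, ∀ j1 j2 : Fin 5, i1 ≠ i2 → j1 ≠ j2 →
          (P i1 j1 : ℕ) + (P i2 j2 : ℕ) ≠
          (P i1 j2 : ℕ) + (P i2 j1 : ℕ))).card := by
    rw [Set.ncard_eq_toFinset_card']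
    have hset : Set.toFinset {P : Fin 3 → Fin 5 → Fin 9 |
        ∀ i1 i2 : Fin 3, ∀ j1 j2 : Fin 5, i1 ≠ i2 → j1 ≠ j2 →
          (P i1 j1 : ℕ) + (P i2 j2 : ℕ) ≠
          (P i1 j2 : ℕ) + (P i2 j1 : ℕ)} =
      (Finset.univ.filter (fun P : Fin 3 → Fin 5 → Fin 9 =>
        ∀ i1 i2 : Fin 3, ∀ j1 j2 : Fin 5, i1 ≠ i2 → j1 ≠ j2 →
          (P i1 j1 : ℕ) + (P i2 j2 : ℕ) ≠
          (P i1 j2 : ℕ) + (P i2 j1 : ℕ))) := by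
      ext P
      simp only [Set.mem_toFinset, Set.mem_setOf_eq, Finset.mem_filter, Finset.mem_univ, true_and]
    rw [hset]
  have hmain := greedy_count (Fin 9) 15 Bex bex Bex_dep Bex_card
  have hprod : (∏ k : Fin 15, (Fintype.card (Fin 9) - bex k)) = 843715731600 := by decide
  rw [hncard]
  calc (94143178827 : ℕ) ≤ 843715731600 := by norm_num
    _ = ∏ k : Fin 15, (Fintype.card (Fin 9) - bex k) := hprod.symm
    _ ≤ _ := le_trans hmain hchain
end
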